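/- arXiv:math/0503407 — 6 statements merged into one kernel-verified Lean document; each statement's English description precedes it below -/
import Mathlib

section
/- Let S be a partially ordered set with a simply connected extension (∼_u, ∼_l), and let a ≠ b in S. Then each equivalence class of the relation O_{a,b} on B_{a,b} is totally ordered by the original partial order <; moreover, if x, y ∈ B_{a,b} with x O_{a,b} y and z ∈ B_{x,y}, then z ∈ B_{a,b} and z O_{a,b} x. -/
open Pointwise

namespace PaperSC

variable {S : Type*}

/-- Exactly one of four propositions holds. -/
def ExactlyOne4 (p q r s : Prop) : Prop :=
  (p ∨ q ∨ r ∨ s) ∧ (p → ¬q ∧ ¬r ∧ ¬s) ∧ (q → ¬r ∧ ¬s) ∧ (r → ¬s)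

/-- `x` and `y` are incomparable with respect to the strict order `lt`. -/
def Incomp (lt : S → S → Prop) (x y : S) : Prop :=
  x ≠ y ∧ ¬ lt x y ∧ ¬ lt y x

/-- The reflexive closure of `lt`. -/
def Le' (lt : S → S → Prop) (x y : S) : Prop := x = y ∨ lt x y

/-- `x ∼ᵤ y` : `x` and `y` are incomparable and have a common upper bound. -/
def SimU (lt : S → S → Prop) (x y : S) : Prop :=
  Incomp lt x y ∧ ∃ z, Le' lt x z ∧ Le' lt y z

/-- `x ∼ₗ y` : `x` and `y` are incomparable and have a common lower bound. -/
def SimL (lt : S → S → Prop) (x y : S) : Prop :=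
  Incomp lt x y ∧ ∃ z, Le' lt z x ∧ Le' lt z y

/-- Every incomparable pair has a common upper bound or a common lower bound. -/
def StronglyConnectedRel (lt : S → S → Prop) : Prop :=
  ∀ x y, Incomp lt x y → SimU lt x y ∨ SimL lt x y

/-- Acyclicity: `x ∼ᵤ y` and `x ∼ₗ z` imply `y < z`. -/
def AcyclicRel (lt : S → S → Prop) : Prop :=
  ∀ x y z, SimU lt x y → SimL lt x z → lt y z

/-- `(u, l)` is a simply connected extension of the strict partial order `lt`. -/
structure IsSCExt (lt u l : S → S → Prop) : Prop where
  u_symm : ∀ x y, u x y → u y x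
  l_symm : ∀ x y, l x y → l y x
  exactly_one : ∀ x y, x ≠ y → ExactlyOne4 (lt x y) (lt y x) (u x y) (l x y)
  u_of_ub : ∀ x y, Incomp lt x y → (∃ z, Le' lt x z ∧ Le' lt y z) → u x y
  l_of_lb : ∀ x y, Incomp lt x y → (∃ z, Le' lt z x ∧ Le' lt z y) → l x y
  acyclic : ∀ x y z, u x y → l x z → lt y z

/-- `b` is between `a` and `c` (with respect to `lt` and the extension `(u, l)`). -/
def Btwn (lt u l : S → S → Prop) (a c b : S) : Prop :=
  (lt a c ∧ ((lt a b ∧ lt b c) ∨ (u a b ∧ l b c))) ∨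
  (lt c a ∧ ((lt c b ∧ lt b a) ∨ (u c b ∧ l b a))) ∨
  (l a c ∧ ((l a b ∧ lt b c) ∨ (l c b ∧ lt b a))) ∨
  (u a c ∧ ((u a b ∧ lt c b) ∨ (u c b ∧ lt a b)))

/-- The between set `B_{a,b}`; it equals `{a}` when `a = b`. -/
def BSet (lt u l : S → S → Prop) (a b : S) : Set S :=
  {a, b} ∪ {x | a ≠ b ∧ Btwn lt u l a b x}

/-- The set `A` is totally ordered by `lt`. -/
def IsChainRel (lt : S → S → Prop) (A : Set S) : Prop :=
  ∀ p ∈ A, ∀ q ∈ A, p = q ∨ lt p q ∨ lt q p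

/-- `x O y` iff `B_{x,y}` is totally ordered by `lt`. -/
def ORel (lt u l : S → S → Prop) (x y : S) : Prop :=
  IsChainRel lt (BSet lt u l x y)

/-- The extension is rectifiable: every between set is a finite union of `O`-classes. -/
def Rectifiable (lt u l : S → S → Prop) : Prop :=
  ∀ a b : S, a ≠ b → ∃ F : Finset S,
    (↑F : Set S) ⊆ BSet lt u l a b ∧
    ∀ x ∈ BSet lt u l a b, ∃ c ∈ F, ORel lt u l x c

section Aux
variable {lt u l : S → S → Prop}

lemma hne_of_lt (hirr : ∀ x : S, ¬ lt x x) {x y : S} (h : lt x y) : x ≠ y :=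
  fun he => hirr x (he ▸ h)

lemma not4_of_u (h : IsSCExt lt u l) {x y : S} (hne : x ≠ y) (hu : u x y) :
    ¬ lt x y ∧ ¬ lt y x ∧ ¬ l x y := by
  obtain ⟨h1, h2, h3, h4⟩ := h.exactly_one x y hne
  exact ⟨fun hp => (h2 hp).2.1 hu, fun hq => (h3 hq).1 hu, h4 hu⟩

lemma not4_of_l (h : IsSCExt lt u l) {x y : S} (hne : x ≠ y) (hl : l x y) :
    ¬ lt x y ∧ ¬ lt y x ∧ ¬ u x y := by
  obtain ⟨h1, h2, h3, h4⟩ := h.exactly_one x y hne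
  exact ⟨fun hp => (h2 hp).2.2 hl, fun hq => (h3 hq).2 hl, fun hr => h4 hr hl⟩

lemma not4_of_lt (h : IsSCExt lt u l) (htr : Transitive lt) (hirr : ∀ x : S, ¬ lt x x)
    {x y : S} (hlt : lt x y) : ¬ lt y x ∧ ¬ u x y ∧ ¬ l x y := by
  obtain ⟨h1, h2, h3, h4⟩ := h.exactly_one x y (hne_of_lt hirr hlt)
  exact ⟨fun hq => hirr x (htr hlt hq), (h2 hlt).2.1, (h2 hlt).2.2⟩

lemma cases4 (h : IsSCExt lt u l) {x y : S} (hne : x ≠ y) :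
    lt x y ∨ lt y x ∨ u x y ∨ l x y := (h.exactly_one x y hne).1

lemma incomp_of_u (h : IsSCExt lt u l) {x y : S} (hne : x ≠ y) (hu : u x y) :
    Incomp lt x y := ⟨hne, (not4_of_u h hne hu).1, (not4_of_u h hne hu).2.1⟩

lemma incomp_of_l (h : IsSCExt lt u l) {x y : S} (hne : x ≠ y) (hl : l x y) :
    Incomp lt x y := ⟨hne, (not4_of_l h hne hl).1, (not4_of_l h hne hl).2.1⟩

lemma ub_u (h : IsSCExt lt u l) {x y w : S} (hinc : Incomp lt x y)
    (hxw : lt x w) (hyw : lt y w) : u x y :=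
  h.u_of_ub x y hinc ⟨w, Or.inr hxw, Or.inr hyw⟩

lemma lb_l (h : IsSCExt lt u l) {x y w : S} (hinc : Incomp lt x y)
    (hwx : lt w x) (hwy : lt w y) : l x y :=
  h.l_of_lb x y hinc ⟨w, Or.inr hwx, Or.inr hwy⟩

lemma mem_BSet_iff {a b w : S} :
    w ∈ BSet lt u l a b ↔ (w = a ∨ w = b ∨ (a ≠ b ∧ Btwn lt u l a b w)) := by
  simp [BSet, Set.mem_union, Set.mem_insert_iff, Set.mem_singleton_iff, Set.mem_setOf_eq,
    or_assoc]

lemma left_mem_BSet {a b : S} : a ∈ BSet lt u l a b := mem_BSet_iff.mpr (Or.inl rfl)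
lemma right_mem_BSet {a b : S} : b ∈ BSet lt u l a b := mem_BSet_iff.mpr (Or.inr (Or.inl rfl))

lemma eq_of_mem_BSet_self {x z : S} (hz : z ∈ BSet lt u l x x) : z = x := by
  rcases mem_BSet_iff.mp hz with rfl | rfl | ⟨hne, -⟩
  · rfl
  · rfl
  · exact absurd rfl hne

lemma mem_BSet_lt (h : IsSCExt lt u l) (htr : Transitive lt) (hirr : ∀ x : S, ¬ lt x x)
    {a b w : S} (hab : lt a b) :
    w ∈ BSet lt u l a b ↔
      (w = a ∨ w = b ∨ (lt a w ∧ lt w b) ∨ (u a w ∧ l w b)) := by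
  have hn := not4_of_lt h htr hirr hab
  rw [mem_BSet_iff]
  constructor
  · rintro (rfl | rfl | ⟨-, (⟨-, H⟩ | ⟨hc, -⟩ | ⟨hc, -⟩ | ⟨hc, -⟩)⟩)
    · exact Or.inl rfl
    · exact Or.inr (Or.inl rfl)
    · exact Or.inr (Or.inr H)
    · exact absurd hc hn.1
    · exact absurd hc hn.2.2
    · exact absurd hc hn.2.1
  · rintro (rfl | rfl | H)
    · exact Or.inl rfl
    · exact Or.inr (Or.inl rfl)
    · exact Or.inr (Or.inr ⟨hne_of_lt hirr hab, Or.inl ⟨hab, H⟩⟩)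

lemma mem_BSet_l (h : IsSCExt lt u l) {a b w : S} (hab : a ≠ b) (hlab : l a b) :
    w ∈ BSet lt u l a b ↔
      (w = a ∨ w = b ∨ (l a w ∧ lt w b) ∨ (l b w ∧ lt w a)) := by
  have hn := not4_of_l h hab hlab
  rw [mem_BSet_iff]
  constructor
  · rintro (rfl | rfl | ⟨-, (⟨hc, -⟩ | ⟨hc, -⟩ | ⟨-, H⟩ | ⟨hc, -⟩)⟩)
    · exact Or.inl rfl
    · exact Or.inr (Or.inl rfl)
    · exact absurd hc hn.1
    · exact absurd hc hn.2.1
    · exact Or.inr (Or.inr H)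
    · exact absurd hc hn.2.2
  · rintro (rfl | rfl | H)
    · exact Or.inl rfl
    · exact Or.inr (Or.inl rfl)
    · exact Or.inr (Or.inr ⟨hab, Or.inr (Or.inr (Or.inl ⟨hlab, H⟩))⟩)

lemma Btwn_symm (h : IsSCExt lt u l) {a c b : S} :
    Btwn lt u l a c b ↔ Btwn lt u l c a b := by
  constructor
  · rintro (H | H | ⟨hl, H⟩ | ⟨hu, H⟩)
    · exact Or.inr (Or.inl H)
    · exact Or.inl H
    · exact Or.inr (Or.inr (Or.inl ⟨h.l_symm _ _ hl, H.symm⟩))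
    · exact Or.inr (Or.inr (Or.inr ⟨h.u_symm _ _ hu, H.symm⟩))
  · rintro (H | H | ⟨hl, H⟩ | ⟨hu, H⟩)
    · exact Or.inr (Or.inl H)
    · exact Or.inl H
    · exact Or.inr (Or.inr (Or.inl ⟨h.l_symm _ _ hl, H.symm⟩))
    · exact Or.inr (Or.inr (Or.inr ⟨h.u_symm _ _ hu, H.symm⟩))

lemma BSet_symm (h : IsSCExt lt u l) (a b : S) : BSet lt u l a b = BSet lt u l b a := by
  ext w
  rw [mem_BSet_iff, mem_BSet_iff]
  constructor
  · rintro (rfl | rfl | ⟨hne, hb⟩)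
    exacts [Or.inr (Or.inl rfl), Or.inl rfl, Or.inr (Or.inr ⟨hne.symm, (Btwn_symm h).mp hb⟩)]
  · rintro (rfl | rfl | ⟨hne, hb⟩)
    exacts [Or.inr (Or.inl rfl), Or.inl rfl, Or.inr (Or.inr ⟨hne.symm, (Btwn_symm h).mpr hb⟩)]

lemma IsSCExt.dual (h : IsSCExt lt u l) : IsSCExt (flip lt) l u where
  u_symm := h.l_symm
  l_symm := h.u_symm
  exactly_one := by
    intro x y hne
    have := h.exactly_one x y hne
    unfold ExactlyOne4 at this ⊢
    unfold flip
    tauto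
  u_of_ub := by
    intro x y hinc hub
    obtain ⟨z, hz1, hz2⟩ := hub
    refine h.l_of_lb x y ⟨hinc.1, hinc.2.2, hinc.2.1⟩ ⟨z, ?_, ?_⟩
    · rcases hz1 with he | hlt
      · exact Or.inl he.symm
      · exact Or.inr hlt
    · rcases hz2 with he | hlt
      · exact Or.inl he.symm
      · exact Or.inr hlt
  l_of_lb := by
    intro x y hinc hlb
    obtain ⟨z, hz1, hz2⟩ := hlb
    refine h.u_of_ub x y ⟨hinc.1, hinc.2.2, hinc.2.1⟩ ⟨z, ?_, ?_⟩
    · rcases hz1 with he | hlt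
      · exact Or.inl he.symm
      · exact Or.inr hlt
    · rcases hz2 with he | hlt
      · exact Or.inl he.symm
      · exact Or.inr hlt
  acyclic := fun x y z h1 h2 => h.acyclic x z y h2 h1

lemma Btwn_dual (h : IsSCExt lt u l) {a c b : S} :
    Btwn (flip lt) l u a c b ↔ Btwn lt u l a c b := by
  constructor
  · rintro (⟨h1, (⟨p, q⟩ | ⟨p, q⟩)⟩ | ⟨h1, (⟨p, q⟩ | ⟨p, q⟩)⟩ | ⟨h1, H⟩ | ⟨h1, H⟩)
    · exact Or.inr (Or.inl ⟨h1, Or.inl ⟨q, p⟩⟩)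
    · exact Or.inr (Or.inl ⟨h1, Or.inr ⟨h.u_symm _ _ q, h.l_symm _ _ p⟩⟩)
    · exact Or.inl ⟨h1, Or.inl ⟨q, p⟩⟩
    · exact Or.inl ⟨h1, Or.inr ⟨h.u_symm _ _ q, h.l_symm _ _ p⟩⟩
    · exact Or.inr (Or.inr (Or.inr ⟨h1, H⟩))
    · exact Or.inr (Or.inr (Or.inl ⟨h1, H⟩))
  · rintro (⟨h1, (⟨p, q⟩ | ⟨p, q⟩)⟩ | ⟨h1, (⟨p, q⟩ | ⟨p, q⟩)⟩ | ⟨h1, H⟩ | ⟨h1, H⟩)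
    · exact Or.inr (Or.inl ⟨h1, Or.inl ⟨q, p⟩⟩)
    · exact Or.inr (Or.inl ⟨h1, Or.inr ⟨h.l_symm _ _ q, h.u_symm _ _ p⟩⟩)
    · exact Or.inl ⟨h1, Or.inl ⟨q, p⟩⟩
    · exact Or.inl ⟨h1, Or.inr ⟨h.l_symm _ _ q, h.u_symm _ _ p⟩⟩
    · exact Or.inr (Or.inr (Or.inr ⟨h1, H⟩))
    · exact Or.inr (Or.inr (Or.inl ⟨h1, H⟩))

lemma BSet_dual (h : IsSCExt lt u l) (a b : S) :
    BSet (flip lt) l u a b = BSet lt u l a b := by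
  ext w
  rw [mem_BSet_iff, mem_BSet_iff]
  constructor
  · rintro (rfl | rfl | ⟨hne, hb⟩)
    exacts [Or.inl rfl, Or.inr (Or.inl rfl), Or.inr (Or.inr ⟨hne, (Btwn_dual h).mp hb⟩)]
  · rintro (rfl | rfl | ⟨hne, hb⟩)
    exacts [Or.inl rfl, Or.inr (Or.inl rfl), Or.inr (Or.inr ⟨hne, (Btwn_dual h).mpr hb⟩)]

end Aux

section Aux2
variable {lt u l : S → S → Prop}

lemma chain_iff (h : IsSCExt lt u l) (htr : Transitive lt) (hirr : ∀ x : S, ¬ lt x x)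
    {x y : S} (hxy : lt x y) :
    IsChainRel lt (BSet lt u l x y) ↔ ∀ w, ¬ (u x w ∧ l w y) := by
  constructor
  · rintro hc w ⟨huw, hlw⟩
    have hnw1 : w ≠ x := by rintro rfl; exact (not4_of_lt h htr hirr hxy).2.2 hlw
    have hnw2 : w ≠ y := by rintro rfl; exact (not4_of_lt h htr hirr hxy).2.1 huw
    have hwB : w ∈ BSet lt u l x y :=
      (mem_BSet_lt h htr hirr hxy).mpr (Or.inr (Or.inr (Or.inr ⟨huw, hlw⟩)))
    rcases hc x left_mem_BSet w hwB with he | hlt1 | hlt1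
    · exact hnw1 he.symm
    · exact (not4_of_u h (Ne.symm hnw1) huw).1 hlt1
    · exact (not4_of_u h (Ne.symm hnw1) huw).2.1 hlt1
  · intro hP p hp q hq
    rw [mem_BSet_lt h htr hirr hxy] at hp hq
    have hp' : p = x ∨ p = y ∨ (lt x p ∧ lt p y) := by
      rcases hp with rfl | rfl | hh | hh
      exacts [Or.inl rfl, Or.inr (Or.inl rfl), Or.inr (Or.inr hh), absurd hh (hP p)]
    have hq' : q = x ∨ q = y ∨ (lt x q ∧ lt q y) := by
      rcases hq with rfl | rfl | hh | hh
      exacts [Or.inl rfl, Or.inr (Or.inl rfl), Or.inr (Or.inr hh), absurd hh (hP q)]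
    rcases hp' with rfl | rfl | ⟨hxp, hpy⟩ <;> rcases hq' with rfl | rfl | hq2
    · exact Or.inl rfl
    · exact Or.inr (Or.inl hxy)
    · exact Or.inr (Or.inl hq2.1)
    · exact Or.inr (Or.inr hxy)
    · exact Or.inl rfl
    · exact Or.inr (Or.inr hq2.2)
    · exact Or.inr (Or.inr hxp)
    · exact Or.inr (Or.inl hpy)
    · by_cases hpq : p = q
      · exact Or.inl hpq
      by_cases h1 : lt p q
      · exact Or.inr (Or.inl h1)
      by_cases h2 : lt q p
      · exact Or.inr (Or.inr h2)
      have hinc : Incomp lt p q := ⟨hpq, h1, h2⟩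
      have hu' := ub_u h hinc hpy hq2.2
      have hl' := lb_l h hinc hxp hq2.1
      exact absurd hl' (not4_of_u h hpq hu').2.2

lemma orel_comparable {x y : S} (hO : ORel lt u l x y) : x = y ∨ lt x y ∨ lt y x :=
  hO x left_mem_BSet y right_mem_BSet

lemma orel_refl {x : S} : ORel lt u l x x := by
  intro p hp q hq
  have hp' := eq_of_mem_BSet_self hp
  have hq' := eq_of_mem_BSet_self hq
  exact Or.inl (hp'.trans hq'.symm)

lemma orel_symm (h : IsSCExt lt u l) {x y : S} (hO : ORel lt u l x y) : ORel lt u l y x := by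
  show IsChainRel lt (BSet lt u l y x)
  rw [← BSet_symm h x y]
  exact hO

lemma Pres1 (h : IsSCExt lt u l) (htr : Transitive lt) (hirr : ∀ x : S, ¬ lt x x)
    {x y z : S} (hxy : lt x y) (hP : ∀ w, ¬ (u x w ∧ l w y)) (hxz : lt x z) (hzy : lt z y) :
    ∀ w, ¬ (u x w ∧ l w z) := by
  rintro w ⟨huw, hlw⟩
  have hwz : w ≠ z := by rintro rfl; exact (not4_of_lt h htr hirr hxz).2.1 huw
  have hwx : w ≠ x := by rintro rfl; exact (not4_of_lt h htr hirr hxz).2.2 hlw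
  have hincwz : Incomp lt w z := incomp_of_l h hwz hlw
  by_cases hwy : w = y
  · subst hwy
    exact (not4_of_lt h htr hirr hzy).2.2 (h.l_symm _ _ hlw)
  by_cases h1 : lt w y
  · exact (not4_of_u h hwz (ub_u h hincwz h1 hzy)).2.2 hlw
  by_cases h2 : lt y w
  · exact hincwz.2.2 (htr hzy h2)
  rcases cases4 h hwy with hc | hc | hc | hc
  · exact h1 hc
  · exact h2 hc
  · exact hirr y (htr (h.acyclic w y z hc hlw) hzy)
  · exact hP w ⟨huw, hc⟩

lemma Pres2 (h : IsSCExt lt u l) (htr : Transitive lt) (hirr : ∀ x : S, ¬ lt x x)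
    {x y z : S} (hxy : lt x y) (hP : ∀ w, ¬ (u x w ∧ l w y)) (hxz : lt x z) (hzy : lt z y) :
    ∀ w, ¬ (u z w ∧ l w y) := by
  rintro w ⟨huw, hlw⟩
  have hwz : w ≠ z := by rintro rfl; exact (not4_of_lt h htr hirr hzy).2.2 hlw
  have hwy : w ≠ y := by rintro rfl; exact (not4_of_lt h htr hirr hzy).2.1 huw
  have hinczw : Incomp lt z w := incomp_of_u h (Ne.symm hwz) huw
  by_cases hwx : w = x
  · subst hwx
    exact hinczw.2.2 hxz
  by_cases h1 : lt x w
  · exact (not4_of_u h (Ne.symm hwz) huw).2.2 (lb_l h hinczw hxz h1)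
  by_cases h2 : lt w x
  · exact (incomp_of_l h hwy hlw).2.1 (htr h2 hxy)
  rcases cases4 h (fun he => hwx he.symm : x ≠ w) with hc | hc | hc | hc
  · exact h1 hc
  · exact h2 hc
  · exact hP w ⟨hc, hlw⟩
  · exact hirr x (htr hxz (h.acyclic w z x (h.u_symm _ _ huw) (h.l_symm _ _ hc)))

end Aux2

section Aux3
variable {lt u l : S → S → Prop}

/-- Helper for `core_lt_up`: the mixed case where `y` is in the chain part (`y = b` or
`y < b`) and `z` is a `u`-`l` bridge element. -/
lemma coreA (h : IsSCExt lt u l) (htr : Transitive lt) (hirr : ∀ x : S, ¬ lt x x)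
    {a b x y z : S} (hab : lt a b) (hx : x ∈ BSet lt u l a b)
    (hyb : y = b ∨ lt y b) (hxy : lt x y) (hxz : lt x z)
    (huaz : u a z) (hlzb : l z b) (hnaz : a ≠ z) : False := by
  have hxb : lt x b := by
    rcases hyb with rfl | hyb
    · exact hxy
    · exact htr hxy hyb
  have hnau := not4_of_u h hnaz huaz
  have hxa1 : x ≠ a := by rintro rfl; exact hnau.1 hxz
  have hxa2 : ¬ lt a x := fun hh => hnau.1 (htr hh hxz)
  have hxa3 : ¬ lt x a := fun hh =>
    hnau.2.2 (lb_l h ⟨hnaz, hnau.1, hnau.2.1⟩ hh hxz)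
  rw [mem_BSet_lt h htr hirr hab] at hx
  rcases hx with hxe | hxe | ⟨hax, -⟩ | ⟨-, hlxb⟩
  · exact hxa1 hxe
  · exact hirr b (hxe ▸ hxb)
  · exact hxa2 hax
  · exact (not4_of_l h (hne_of_lt hirr hxb) hlxb).1 hxb

lemma core_lt_up (h : IsSCExt lt u l) (htr : Transitive lt) (hirr : ∀ x : S, ¬ lt x x)
    {a b x y z : S} (hab : lt a b)
    (hx : x ∈ BSet lt u l a b) (hy : y ∈ BSet lt u l a b) (hz : z ∈ BSet lt u l a b)
    (hyz : Incomp lt y z) (hxy : lt x y) (hxz : lt x z) : False := by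
  have hlyz : l y z := lb_l h hyz hxy hxz
  rw [mem_BSet_lt h htr hirr hab] at hy hz
  rcases hy with rfl | rfl | ⟨hay, hyb⟩ | ⟨huay, hlyb⟩ <;>
    rcases hz with rfl | rfl | ⟨haz, hzb⟩ | ⟨huaz, hlzb⟩
  · exact hyz.1 rfl
  · exact hyz.2.1 hab
  · exact hyz.2.1 haz
  · exact (not4_of_l h hyz.1 hlyz).2.2 huaz
  · exact hyz.2.2 hab
  · exact hyz.1 rfl
  · exact hyz.2.2 hzb
  · -- y = b, z bridge
    have hnaz : a ≠ z := by rintro rfl; exact (not4_of_lt h htr hirr hab).2.2 hlzb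
    exact coreA h htr hirr hab hx (Or.inl rfl) hxy hxz huaz hlzb hnaz
  · exact hyz.2.2 hay
  · exact hyz.2.1 hyb
  · exact (not4_of_l h hyz.1 hlyz).2.2 (ub_u h hyz hyb hzb)
  · have hnaz : a ≠ z := by rintro rfl; exact (not4_of_lt h htr hirr hab).2.2 hlzb
    exact coreA h htr hirr hab hx (Or.inr hyb) hxy hxz huaz hlzb hnaz
  · -- y bridge, z = a
    exact (not4_of_u h (Ne.symm hyz.1) huay).2.2 (h.l_symm _ _ hlyz)
  · have hnay : a ≠ y := by rintro rfl; exact (not4_of_lt h htr hirr hab).2.2 hlyb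
    exact coreA h htr hirr hab hx (Or.inl rfl) hxz hxy huay hlyb hnay
  · have hnay : a ≠ y := by rintro rfl; exact (not4_of_lt h htr hirr hab).2.2 hlyb
    exact coreA h htr hirr hab hx (Or.inr hzb) hxz hxy huay hlyb hnay
  · -- both bridges
    have hnaz : a ≠ z := by rintro rfl; exact (not4_of_lt h htr hirr hab).2.2 hlzb
    exact (not4_of_u h hnaz huaz).1 (h.acyclic y a z (h.u_symm _ _ huay) hlyz)

/-- Helper: kill `x ∈ BSet a b` when `l a b`, `lt x a`, `lt x b`. -/
lemma killx (h : IsSCExt lt u l) (hirr : ∀ x : S, ¬ lt x x)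
    {a b x : S} (hab : a ≠ b) (hlab : l a b)
    (hx : x ∈ BSet lt u l a b) (hxa : lt x a) (hxb : lt x b) : False := by
  rw [mem_BSet_l h hab hlab] at hx
  rcases hx with hxe | hxe | ⟨hlax, -⟩ | ⟨hlbx, -⟩
  · exact hirr a (hxe ▸ hxa)
  · exact hirr b (hxe ▸ hxb)
  · exact (not4_of_l h (Ne.symm (hne_of_lt hirr hxa)) hlax).2.1 hxa
  · exact (not4_of_l h (Ne.symm (hne_of_lt hirr hxb)) hlbx).2.1 hxb

lemma core_l_up (h : IsSCExt lt u l) (htr : Transitive lt) (hirr : ∀ x : S, ¬ lt x x)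
    {a b x y z : S} (hab : a ≠ b) (hlab : l a b)
    (hx : x ∈ BSet lt u l a b) (hy : y ∈ BSet lt u l a b) (hz : z ∈ BSet lt u l a b)
    (hyz : Incomp lt y z) (hxy : lt x y) (hxz : lt x z) : False := by
  have hlyz : l y z := lb_l h hyz hxy hxz
  rw [mem_BSet_l h hab hlab] at hy hz
  rcases hy with rfl | rfl | ⟨hlay, hyb⟩ | ⟨hlby, hya⟩ <;>
    rcases hz with rfl | rfl | ⟨hlaz, hzb⟩ | ⟨hlbz, hza⟩
  · exact hyz.1 rfl
  · exact killx h hirr hab hlab hx hxy hxz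
  · exact killx h hirr hab hlab hx hxy (htr hxz hzb)
  · exact hyz.2.2 hza
  · exact killx h hirr hab hlab hx hxz hxy
  · exact hyz.1 rfl
  · exact hyz.2.2 hzb
  · exact killx h hirr hab hlab hx (htr hxz hza) hxy
  · exact killx h hirr hab hlab hx hxz (htr hxy hyb)
  · exact hyz.2.1 hyb
  · exact (not4_of_l h hyz.1 hlyz).2.2 (ub_u h hyz hyb hzb)
  · exact killx h hirr hab hlab hx (htr hxz hza) (htr hxy hyb)
  · exact hyz.2.1 hya
  · exact killx h hirr hab hlab hx (htr hxy hya) hxz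
  · exact killx h hirr hab hlab hx (htr hxy hya) (htr hxz hzb)
  · exact (not4_of_l h hyz.1 hlyz).2.2 (ub_u h hyz hya hza)

lemma core_l_dn (h : IsSCExt lt u l) (htr : Transitive lt) (hirr : ∀ x : S, ¬ lt x x)
    {a b x y z : S} (hab : a ≠ b) (hlab : l a b)
    (hx : x ∈ BSet lt u l a b) (hy : y ∈ BSet lt u l a b) (hz : z ∈ BSet lt u l a b)
    (hyz : Incomp lt y z) (hyx : lt y x) (hzx : lt z x) : False := by
  have huyz : u y z := ub_u h hyz hyx hzx
  have hn := not4_of_l h hab hlab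
  rw [mem_BSet_l h hab hlab] at hy hz
  rcases hy with rfl | rfl | ⟨hlay, hyb⟩ | ⟨hlby, hya⟩ <;>
    rcases hz with rfl | rfl | ⟨hlaz, hzb⟩ | ⟨hlbz, hza⟩
  · exact hyz.1 rfl
  · exact hn.2.2 huyz
  · exact (not4_of_l h hyz.1 hlaz).2.2 huyz
  · exact hyz.2.2 hza
  · exact hn.2.2 (h.u_symm _ _ huyz)
  · exact hyz.1 rfl
  · exact hyz.2.2 hzb
  · exact (not4_of_l h hyz.1 hlbz).2.2 huyz
  · exact (not4_of_l h (Ne.symm hyz.1) hlay).2.2 (h.u_symm _ _ huyz)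
  · exact hyz.2.1 hyb
  · -- both in Ma: acyclic
    exact (not4_of_l h (Ne.symm (hne_of_lt hirr (h.acyclic y z a huyz (h.l_symm _ _ hlay))))
      hlaz).2.1 (h.acyclic y z a huyz (h.l_symm _ _ hlay))
  · -- y in Ma, z in Mb
    rw [mem_BSet_l h hab hlab] at hx
    rcases hx with hxe | hxe | ⟨-, hxb⟩ | ⟨-, hxa⟩
    · exact (not4_of_l h (Ne.symm (hne_of_lt hirr (hxe ▸ hyx))) hlay).2.1 (hxe ▸ hyx)
    · exact (not4_of_l h (Ne.symm (hne_of_lt hirr (hxe ▸ hzx))) hlbz).2.1 (hxe ▸ hzx)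
    · have hzb : lt z b := htr hzx hxb
      exact (not4_of_l h (Ne.symm (hne_of_lt hirr hzb)) hlbz).2.1 hzb
    · have hya : lt y a := htr hyx hxa
      exact (not4_of_l h (Ne.symm (hne_of_lt hirr hya)) hlay).2.1 hya
  · exact hyz.2.1 hya
  · exact (not4_of_l h (Ne.symm hyz.1) hlby).2.2 (h.u_symm _ _ huyz)
  · -- y in Mb, z in Ma
    rw [mem_BSet_l h hab hlab] at hx
    rcases hx with hxe | hxe | ⟨-, hxb⟩ | ⟨-, hxa⟩
    · exact (not4_of_l h (Ne.symm (hne_of_lt hirr (hxe ▸ hzx))) hlaz).2.1 (hxe ▸ hzx)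
    · exact (not4_of_l h (Ne.symm (hne_of_lt hirr (hxe ▸ hyx))) hlby).2.1 (hxe ▸ hyx)
    · have hyb : lt y b := htr hyx hxb
      exact (not4_of_l h (Ne.symm (hne_of_lt hirr hyb)) hlby).2.1 hyb
    · have hza : lt z a := htr hzx hxa
      exact (not4_of_l h (Ne.symm (hne_of_lt hirr hza)) hlaz).2.1 hza
  · -- both in Mb
    exact (not4_of_l h (Ne.symm (hne_of_lt hirr (h.acyclic y z b huyz (h.l_symm _ _ hlby))))
      hlbz).2.1 (h.acyclic y z b huyz (h.l_symm _ _ hlby))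

end Aux3

section Aux4
variable {lt u l : S → S → Prop}

lemma conv_lt (h : IsSCExt lt u l) (htr : Transitive lt) (hirr : ∀ x : S, ¬ lt x x)
    {a b x y z : S} (hab : lt a b)
    (hx : x ∈ BSet lt u l a b) (hy : y ∈ BSet lt u l a b)
    (hxz : lt x z) (hzy : lt z y) : z ∈ BSet lt u l a b := by
  rw [mem_BSet_lt h htr hirr hab] at hx hy ⊢
  have hxy : lt x y := htr hxz hzy
  rcases hx with hxe | hxe | ⟨hax, hxb⟩ | ⟨huax, hlxb⟩ <;>
    rcases hy with hye | hye | ⟨hay, hyb⟩ | ⟨huay, hlyb⟩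
  · exact absurd (htr (hxe ▸ hxz) (hye ▸ hzy)) (hirr a)
  · exact Or.inr (Or.inr (Or.inl ⟨hxe ▸ hxz, hye ▸ hzy⟩))
  · exact Or.inr (Or.inr (Or.inl ⟨hxe ▸ hxz, htr hzy hyb⟩))
  · have hay' : lt a y := htr (hxe ▸ hxz) hzy
    exact absurd hay' (not4_of_u h (hne_of_lt hirr hay') huay).1
  · exact absurd (htr (hxe ▸ hxz) (hye ▸ hzy)) (not4_of_lt h htr hirr hab).1
  · exact absurd (htr (hxe ▸ hxz) (hye ▸ hzy)) (hirr b)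
  · exact absurd (htr (hxe ▸ hxz) (htr hzy hyb)) (hirr b)
  · have hby : lt b y := htr (hxe ▸ hxz) hzy
    exact absurd hby (not4_of_l h (Ne.symm (hne_of_lt hirr hby)) hlyb).2.1
  · exact absurd (htr hax (htr hxz (hye ▸ hzy))) (hirr a)
  · exact Or.inr (Or.inr (Or.inl ⟨htr hax hxz, hye ▸ hzy⟩))
  · exact Or.inr (Or.inr (Or.inl ⟨htr hax hxz, htr hzy hyb⟩))
  · have hay' : lt a y := htr hax hxy
    exact absurd hay' (not4_of_u h (hne_of_lt hirr hay') huay).1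
  · have hxa : lt x a := htr hxz (hye ▸ hzy)
    exact absurd hxa (not4_of_u h (Ne.symm (hne_of_lt hirr hxa)) huax).2.1
  · have hxb : lt x b := htr hxz (hye ▸ hzy)
    exact absurd hxb (not4_of_l h (hne_of_lt hirr hxb) hlxb).1
  · have hxb : lt x b := htr hxy hyb
    exact absurd hxb (not4_of_l h (hne_of_lt hirr hxb) hlxb).1
  · -- x, y both bridges: show z is a bridge
    have hnax : a ≠ x := by rintro rfl; exact (not4_of_lt h htr hirr hab).2.2 hlxb
    have hnay : a ≠ y := by rintro rfl; exact (not4_of_lt h htr hirr hab).2.2 hlyb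
    have hnxb : x ≠ b := by rintro rfl; exact (not4_of_lt h htr hirr hab).2.1 huax
    have hnyb : y ≠ b := by rintro rfl; exact (not4_of_lt h htr hirr hab).2.1 huay
    have hnux := not4_of_u h hnax huax
    have hnuy := not4_of_u h hnay huay
    have hnlx := not4_of_l h hnxb hlxb
    have hnly := not4_of_l h hnyb hlyb
    have hza : ¬ lt z a := fun hh => hnux.2.1 (htr hxz hh)
    have haz : ¬ lt a z := fun hh => hnuy.1 (htr hh hzy)
    have hnza : z ≠ a := by rintro rfl; exact hnux.2.1 hxz
    rcases cases4 h (Ne.symm hnza) with hc | hc | hc | hc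
    · exact absurd hc haz
    · exact absurd hc hza
    · -- u a z; now z vs b
      have hzb' : ¬ lt z b := fun hh => hnlx.1 (htr hxz hh)
      have hbz : ¬ lt b z := fun hh => hnly.2.1 (htr hh hzy)
      have hnzb : z ≠ b := by rintro rfl; exact hnly.2.1 hzy
      rcases cases4 h hnzb with hd | hd | hd | hd
      · exact absurd hd hzb'
      · exact absurd hd hbz
      · have hzx : lt z x := h.acyclic b z x (h.u_symm _ _ hd) (h.l_symm _ _ hlxb)
        exact absurd (htr hxz hzx) (hirr x)
      · exact Or.inr (Or.inr (Or.inr ⟨hc, hd⟩))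
    · -- l a z
      exact absurd (htr hzy (h.acyclic a y z huay hc)) (hirr z)

lemma conv_l (h : IsSCExt lt u l) (htr : Transitive lt) (hirr : ∀ x : S, ¬ lt x x)
    {a b x y z : S} (hab : a ≠ b) (hlab : l a b)
    (hx : x ∈ BSet lt u l a b) (hy : y ∈ BSet lt u l a b)
    (hxz : lt x z) (hzy : lt z y) : z ∈ BSet lt u l a b := by
  have hn := not4_of_l h hab hlab
  rw [mem_BSet_l h hab hlab] at hx hy ⊢
  have hxy : lt x y := htr hxz hzy
  rcases hx with hxe | hxe | ⟨hlax, hxb⟩ | ⟨hlbx, hxa⟩ <;>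
    rcases hy with hye | hye | ⟨hlay, hyb⟩ | ⟨hlby, hya⟩
  · exact absurd (htr (hxe ▸ hxz) (hye ▸ hzy)) (hirr a)
  · exact absurd (htr (hxe ▸ hxz) (hye ▸ hzy)) hn.1
  · have hay' : lt a y := htr (hxe ▸ hxz) hzy
    exact absurd hay' (not4_of_l h (hne_of_lt hirr hay') hlay).1
  · exact absurd (htr (hxe ▸ hxz) (htr hzy hya)) (hirr a)
  · exact absurd (htr (hxe ▸ hxz) (hye ▸ hzy)) hn.2.1
  · exact absurd (htr (hxe ▸ hxz) (hye ▸ hzy)) (hirr b)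
  · exact absurd (htr (hxe ▸ hxz) (htr hzy hyb)) (hirr b)
  · have hby : lt b y := htr (hxe ▸ hxz) hzy
    exact absurd hby (not4_of_l h (hne_of_lt hirr hby) hlby).1
  · -- x ∈ Ma, y = a
    have hxa : lt x a := htr hxz (hye ▸ hzy)
    exact absurd hxa (not4_of_l h (Ne.symm (hne_of_lt hirr hxa)) hlax).2.1
  · -- x ∈ Ma, y = b : z ∈ Ma
    have hzb : lt z b := hye ▸ hzy
    have hnaz : a ≠ z := by
      rintro rfl
      exact (not4_of_l h (Ne.symm (hne_of_lt hirr hxz)) hlax).2.1 hxz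
    rcases cases4 h hnaz with hc | hc | hc | hc
    · exact absurd (htr hc hzb) hn.1
    · exact absurd (htr hxz hc)
        (not4_of_l h (Ne.symm (hne_of_lt hirr (htr hxz hc))) hlax).2.1
    · exact absurd (htr (h.acyclic a z x hc hlax) hxz) (hirr z)
    · exact Or.inr (Or.inr (Or.inl ⟨hc, hzb⟩))
  · -- x ∈ Ma, y ∈ Ma : z ∈ Ma
    have hnaz : a ≠ z := by
      rintro rfl
      exact (not4_of_l h (Ne.symm (hne_of_lt hirr hxz)) hlax).2.1 hxz
    rcases cases4 h hnaz with hc | hc | hc | hc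
    · exact absurd (htr hc hzy) (not4_of_l h (hne_of_lt hirr (htr hc hzy)) hlay).1
    · exact absurd (htr hxz hc)
        (not4_of_l h (Ne.symm (hne_of_lt hirr (htr hxz hc))) hlax).2.1
    · exact absurd (htr (h.acyclic a z x hc hlax) hxz) (hirr z)
    · exact Or.inr (Or.inr (Or.inl ⟨hc, htr hzy hyb⟩))
  · -- x ∈ Ma, y ∈ Mb : dead
    exact absurd (htr hxy hya)
      (not4_of_l h (Ne.symm (hne_of_lt hirr (htr hxy hya))) hlax).2.1
  · -- x ∈ Mb, y = a : z ∈ Mb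
    have hza : lt z a := hye ▸ hzy
    have hnbz : b ≠ z := by
      rintro rfl
      exact (not4_of_l h (Ne.symm (hne_of_lt hirr hxz)) hlbx).2.1 hxz
    rcases cases4 h hnbz with hc | hc | hc | hc
    · exact absurd (htr hc hza) hn.2.1
    · exact absurd (htr hxz hc)
        (not4_of_l h (Ne.symm (hne_of_lt hirr (htr hxz hc))) hlbx).2.1
    · exact absurd (htr (h.acyclic b z x hc hlbx) hxz) (hirr z)
    · exact Or.inr (Or.inr (Or.inr ⟨hc, hza⟩))
  · -- x ∈ Mb, y = b : dead
    have hxb' : lt x b := htr hxz (hye ▸ hzy)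
    exact absurd hxb' (not4_of_l h (Ne.symm (hne_of_lt hirr hxb')) hlbx).2.1
  · -- x ∈ Mb, y ∈ Ma : dead
    exact absurd (htr hxy hyb)
      (not4_of_l h (Ne.symm (hne_of_lt hirr (htr hxy hyb))) hlbx).2.1
  · -- x ∈ Mb, y ∈ Mb : z ∈ Mb
    have hnbz : b ≠ z := by
      rintro rfl
      exact (not4_of_l h (Ne.symm (hne_of_lt hirr hxz)) hlbx).2.1 hxz
    rcases cases4 h hnbz with hc | hc | hc | hc
    · exact absurd (htr hc hzy) (not4_of_l h (hne_of_lt hirr (htr hc hzy)) hlby).1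
    · exact absurd (htr hxz hc)
        (not4_of_l h (Ne.symm (hne_of_lt hirr (htr hxz hc))) hlbx).2.1
    · exact absurd (htr (h.acyclic b z x hc hlbx) hxz) (hirr z)
    · exact Or.inr (Or.inr (Or.inr ⟨hc, htr hzy hya⟩))

end Aux4

section Aux5
variable {lt u l : S → S → Prop}

lemma core_up (h : IsSCExt lt u l) (htr : Transitive lt) (hirr : ∀ x : S, ¬ lt x x)
    {a b x y z : S} (hab : a ≠ b)
    (hx : x ∈ BSet lt u l a b) (hy : y ∈ BSet lt u l a b) (hz : z ∈ BSet lt u l a b)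
    (hyz : Incomp lt y z) (hxy : lt x y) (hxz : lt x z) : False := by
  have htr' : Transitive (flip lt) := fun p q r h1 h2 => htr h2 h1
  have hirr' : ∀ p : S, ¬ flip lt p p := hirr
  rcases cases4 h hab with hc | hc | hc | hc
  · exact core_lt_up h htr hirr hc hx hy hz hyz hxy hxz
  · rw [BSet_symm h a b] at hx hy hz
    exact core_lt_up h htr hirr hc hx hy hz hyz hxy hxz
  · -- u a b : dual of core_l_dn
    refine core_l_dn h.dual htr' hirr' hab hc ?_ ?_ ?_
      ⟨hyz.1, hyz.2.2, hyz.2.1⟩ (show lt x y from hxy) (show lt x z from hxz) <;>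
      rw [BSet_dual h]
    exacts [hx, hy, hz]
  · exact core_l_up h htr hirr hab hc hx hy hz hyz hxy hxz

lemma core_dn (h : IsSCExt lt u l) (htr : Transitive lt) (hirr : ∀ x : S, ¬ lt x x)
    {a b x y z : S} (hab : a ≠ b)
    (hx : x ∈ BSet lt u l a b) (hy : y ∈ BSet lt u l a b) (hz : z ∈ BSet lt u l a b)
    (hyz : Incomp lt y z) (hyx : lt y x) (hzx : lt z x) : False := by
  have htr' : Transitive (flip lt) := fun p q r h1 h2 => htr h2 h1
  have hirr' : ∀ p : S, ¬ flip lt p p := hirr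
  rcases cases4 h hab with hc | hc | hc | hc
  · -- lt a b : use dual core_lt_up with a, b swapped
    refine core_lt_up h.dual htr' hirr' (show flip lt b a from hc) ?_ ?_ ?_
      ⟨hyz.1, hyz.2.2, hyz.2.1⟩ (show lt y x from hyx) (show lt z x from hzx) <;>
      rw [BSet_dual h, ← BSet_symm h a b]
    exacts [hx, hy, hz]
  · refine core_lt_up h.dual htr' hirr' (show flip lt a b from hc) ?_ ?_ ?_
      ⟨hyz.1, hyz.2.2, hyz.2.1⟩ (show lt y x from hyx) (show lt z x from hzx) <;>
      rw [BSet_dual h]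
    exacts [hx, hy, hz]
  · -- u a b : dual of core_l_up
    refine core_l_up h.dual htr' hirr' hab hc ?_ ?_ ?_
      ⟨hyz.1, hyz.2.2, hyz.2.1⟩ (show lt y x from hyx) (show lt z x from hzx) <;>
      rw [BSet_dual h]
    exacts [hx, hy, hz]
  · exact core_l_dn h htr hirr hab hc hx hy hz hyz hyx hzx

lemma convex (h : IsSCExt lt u l) (htr : Transitive lt) (hirr : ∀ x : S, ¬ lt x x)
    {a b x y z : S} (hab : a ≠ b)
    (hx : x ∈ BSet lt u l a b) (hy : y ∈ BSet lt u l a b)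
    (hxz : lt x z) (hzy : lt z y) : z ∈ BSet lt u l a b := by
  have htr' : Transitive (flip lt) := fun p q r h1 h2 => htr h2 h1
  have hirr' : ∀ p : S, ¬ flip lt p p := hirr
  rcases cases4 h hab with hc | hc | hc | hc
  · exact conv_lt h htr hirr hc hx hy hxz hzy
  · rw [BSet_symm h a b] at hx hy ⊢
    exact conv_lt h htr hirr hc hx hy hxz hzy
  · -- u a b : dual of conv_l
    rw [← BSet_dual h]
    refine conv_l h.dual htr' hirr' hab hc ?_ ?_
      (show lt z y from hzy) (show lt x z from hxz) <;> rw [BSet_dual h]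
    exacts [hy, hx]
  · exact conv_l h htr hirr hab hc hx hy hxz hzy

end Aux5


/-- Each `O_{a,b}`-equivalence class in `B_{a,b}` is totally ordered by `<`;
moreover if `x O_{a,b} y` and `z ∈ B_{x,y}` then `z ∈ B_{a,b}` and `z O_{a,b} x`. -/
theorem stmt9 {S : Type*} [PartialOrder S] (u l : S → S → Prop)
    (hsce : IsSCExt ((· < ·) : S → S → Prop) u l) (a b : S) (hab : a ≠ b) :
    (∀ x ∈ BSet ((· < ·) : S → S → Prop) u l a b,
      IsChainRel ((· < ·) : S → S → Prop)
        {y | y ∈ BSet ((· < ·) : S → S → Prop) u l a b ∧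
          ORel ((· < ·) : S → S → Prop) u l x y}) ∧
    (∀ x ∈ BSet ((· < ·) : S → S → Prop) u l a b,
      ∀ y ∈ BSet ((· < ·) : S → S → Prop) u l a b,
        ORel ((· < ·) : S → S → Prop) u l x y →
          ∀ z ∈ BSet ((· < ·) : S → S → Prop) u l x y,
            z ∈ BSet ((· < ·) : S → S → Prop) u l a b ∧
              ORel ((· < ·) : S → S → Prop) u l z x) := by
  have htr : Transitive ((· < ·) : S → S → Prop) := fun _ _ _ h1 h2 => lt_trans h1 h2
  have hirr : ∀ x : S, ¬ x < x := lt_irrefl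
  constructor
  · -- each O-class is a chain
    intro x hx p hp q hq
    simp only [Set.mem_setOf_eq] at hp hq
    obtain ⟨hpB, hOp⟩ := hp
    obtain ⟨hqB, hOq⟩ := hq
    by_cases hpq : p = q
    · exact Or.inl hpq
    by_cases h1 : p < q
    · exact Or.inr (Or.inl h1)
    by_cases h2 : q < p
    · exact Or.inr (Or.inr h2)
    exfalso
    have hinc : Incomp ((· < ·) : S → S → Prop) p q := ⟨hpq, h1, h2⟩
    rcases orel_comparable hOp with he | hlt | hlt
    · subst he
      rcases orel_comparable hOq with he' | hlt' | hlt'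
      exacts [hpq he', h1 hlt', h2 hlt']
    · rcases orel_comparable hOq with he' | hlt' | hlt'
      · subst he'
        exact h2 hlt
      · exact core_up hsce htr hirr hab hx hpB hqB hinc hlt hlt'
      · exact h2 (htr hlt' hlt)
    · rcases orel_comparable hOq with he' | hlt' | hlt'
      · subst he'
        exact h1 hlt
      · exact h1 (htr hlt hlt')
      · exact core_dn hsce htr hirr hab hx hpB hqB hinc hlt hlt'
  · -- between sets of O-related pairs
    intro x hx y hy hO z hz
    rcases orel_comparable hO with he | hlt | hlt
    · subst he
      have hzx := eq_of_mem_BSet_self hz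
      subst hzx
      exact ⟨hx, orel_refl⟩
    · -- x < y
      rw [mem_BSet_lt hsce htr hirr hlt] at hz
      rcases hz with rfl | rfl | ⟨hxz, hzy⟩ | ⟨hu1, hl1⟩
      · exact ⟨hx, orel_refl⟩
      · exact ⟨hy, orel_symm hsce hO⟩
      · refine ⟨convex hsce htr hirr hab hx hy hxz hzy, ?_⟩
        have hP := (chain_iff hsce htr hirr hlt).mp hO
        have hPz := Pres1 hsce htr hirr hlt hP hxz hzy
        exact orel_symm hsce ((chain_iff hsce htr hirr hxz).mpr hPz)
      · exact absurd ⟨hu1, hl1⟩ (((chain_iff hsce htr hirr hlt).mp hO) z)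
    · -- y < x
      rw [BSet_symm hsce x y, mem_BSet_lt hsce htr hirr hlt] at hz
      have hOyx := orel_symm hsce hO
      rcases hz with rfl | rfl | ⟨hyz, hzx⟩ | ⟨hu1, hl1⟩
      · exact ⟨hy, hOyx⟩
      · exact ⟨hx, orel_refl⟩
      · refine ⟨convex hsce htr hirr hab hy hx hyz hzx, ?_⟩
        have hP := (chain_iff hsce htr hirr hlt).mp hOyx
        have hPz := Pres2 hsce htr hirr hlt hP hyz hzx
        exact (chain_iff hsce htr hirr hzx).mpr hPz
      · exact absurd ⟨hu1, hl1⟩ (((chain_iff hsce htr hirr hlt).mp hOyx) z)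

end PaperSC
end

section
/- Let G be a group with a left-invariant partial order < admitting a left-invariant simply connected extension (∼_u, ∼_l), and let H be a completely convex normal subgroup of G. Then the relation <' is a left-invariant partial order on the quotient group G/H, and (∼_u', ∼_l') is a left-invariant simply connected extension of <'. In particular, G/H admits a left-invariant partial order with a left-invariant simply connected extension. -/
open Pointwise

namespace PaperSC

variable {S : Type*}

/-- A relation on a group is left-invariant. -/
def LeftInvariant {G : Type*} [Group G] (r : G → G → Prop) : Prop :=
  ∀ f g h : G, r g h → r (f * g) (f * h)

/-- A subgroup `H` is completely convex: between sets of elements of `H` lie in `H`. -/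
def CompletelyConvex {G : Type*} [Group G] (lt u l : G → G → Prop) (H : Subgroup G) : Prop :=
  ∀ h1 ∈ H, ∀ h2 ∈ H, BSet lt u l h1 h2 ⊆ (H : Set G)

/-- The relation induced on the quotient `G ⧸ H` by a relation `r` on `G`:
`g₁H r' g₂H` iff the cosets are distinct and `r g₁ (g₂ h)` for some `h ∈ H`. -/
def QRel {G : Type*} [Group G] (r : G → G → Prop) (H : Subgroup G) (x y : G ⧸ H) : Prop :=
  x ≠ y ∧ ∃ g1 g2 : G, (g1 : G ⧸ H) = x ∧ (g2 : G ⧸ H) = y ∧ ∃ h ∈ H, r g1 (g2 * h)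


section Aux

variable {G : Type*} [Group G] {lt u l : G → G → Prop} {H : Subgroup G}

/-- Bundled context for the auxiliary lemmas. -/
structure Ctx (lt u l : G → G → Prop) (H : Subgroup G) : Prop where
  hirr : ∀ x : G, ¬ lt x x
  htrans : ∀ x y z : G, lt x y → lt y z → lt x z
  hltinv : LeftInvariant lt
  huinv : LeftInvariant u
  hlinv : LeftInvariant l
  hsce : IsSCExt lt u l
  hN : H.Normal
  hcc : CompletelyConvex lt u l H

theorem Ctx.memBtwn (C : Ctx lt u l H) {h1 h2 g : G} (m1 : h1 ∈ H) (m2 : h2 ∈ H)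
    (hne : h1 ≠ h2) (hb : Btwn lt u l h1 h2 g) : g ∈ H :=
  C.hcc h1 m1 h2 m2 (Or.inr ⟨hne, hb⟩)

theorem Ctx.btwn_inv (C : Ctx lt u l H) (f : G) {a c b : G} (h : Btwn lt u l a c b) :
    Btwn lt u l (f * a) (f * c) (f * b) := by
  rcases h with ⟨h1, ⟨h2, h3⟩ | ⟨h2, h3⟩⟩ | ⟨h1, ⟨h2, h3⟩ | ⟨h2, h3⟩⟩ |
    ⟨h1, ⟨h2, h3⟩ | ⟨h2, h3⟩⟩ | ⟨h1, ⟨h2, h3⟩ | ⟨h2, h3⟩⟩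
  · exact Or.inl ⟨C.hltinv f _ _ h1, Or.inl ⟨C.hltinv f _ _ h2, C.hltinv f _ _ h3⟩⟩
  · exact Or.inl ⟨C.hltinv f _ _ h1, Or.inr ⟨C.huinv f _ _ h2, C.hlinv f _ _ h3⟩⟩
  · exact Or.inr (Or.inl ⟨C.hltinv f _ _ h1, Or.inl ⟨C.hltinv f _ _ h2, C.hltinv f _ _ h3⟩⟩)
  · exact Or.inr (Or.inl ⟨C.hltinv f _ _ h1, Or.inr ⟨C.huinv f _ _ h2, C.hlinv f _ _ h3⟩⟩)
  · exact Or.inr (Or.inr (Or.inl ⟨C.hlinv f _ _ h1, Or.inl ⟨C.hlinv f _ _ h2, C.hltinv f _ _ h3⟩⟩))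
  · exact Or.inr (Or.inr (Or.inl ⟨C.hlinv f _ _ h1, Or.inr ⟨C.hlinv f _ _ h2, C.hltinv f _ _ h3⟩⟩))
  · exact Or.inr (Or.inr (Or.inr ⟨C.huinv f _ _ h1, Or.inl ⟨C.huinv f _ _ h2, C.hltinv f _ _ h3⟩⟩))
  · exact Or.inr (Or.inr (Or.inr ⟨C.huinv f _ _ h1, Or.inr ⟨C.huinv f _ _ h2, C.hltinv f _ _ h3⟩⟩))

/-- Kernel lemma F : `1 < p < k` with `k ∈ H`, `p ∉ H` is impossible. -/
theorem Ctx.kerF (C : Ctx lt u l H) {p k : G} (hk : k ∈ H) (hp : p ∉ H)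
    (h1 : lt 1 p) (h2 : lt p k) : False := by
  have h3 : lt 1 k := C.htrans _ _ _ h1 h2
  have hne : (1 : G) ≠ k := fun h => C.hirr 1 (h ▸ h3)
  exact hp (C.memBtwn H.one_mem hk hne (Or.inl ⟨h3, Or.inl ⟨h1, h2⟩⟩))

/-- Kernel lemma E : `l p 1`, `u p k` with `k ∈ H`, `p ∉ H` is impossible. -/
theorem Ctx.kerE (C : Ctx lt u l H) {p k : G} (hk : k ∈ H) (hp : p ∉ H)
    (hl : l p 1) (hu : u p k) : False := by
  have h1 : lt k 1 := C.hsce.acyclic p k 1 hu hl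
  have hne : k ≠ (1 : G) := fun h => C.hirr 1 (h ▸ h1)
  exact hp (C.memBtwn hk H.one_mem hne (Or.inl ⟨h1, Or.inr ⟨C.hsce.u_symm p k hu, hl⟩⟩))

/-- Kernel lemma C : `l p 1`, `lt p k` with `k ∈ H`, `p ∉ H` is impossible. -/
theorem Ctx.kerC (C : Ctx lt u l H) {p k : G} (hk : k ∈ H) (hp : p ∉ H)
    (hl : l p 1) (hlt : lt p k) : False := by
  have hp1 : p ≠ 1 := fun h => hp (h ▸ H.one_mem)
  by_cases hk1 : k = 1
  · subst hk1
    exact ((C.hsce.exactly_one p 1 hp1).2.1 hlt).2.2 hl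
  rcases (C.hsce.exactly_one 1 k (Ne.symm hk1)).1 with h1 | h1 | h1 | h1
  · -- 1 < k : common upper bound k forces u p 1
    have hinc : Incomp lt p 1 := by
      obtain ⟨-, ha, hb, -⟩ := C.hsce.exactly_one p 1 hp1
      exact ⟨hp1, fun h => (ha h).2.2 hl, fun h => (hb h).2 hl⟩
    have := C.hsce.u_of_ub p 1 hinc ⟨k, Or.inr hlt, Or.inr h1⟩
    exact (C.hsce.exactly_one p 1 hp1).2.2.2 this hl
  · -- k < 1 : p < 1
    exact ((C.hsce.exactly_one p 1 hp1).2.1 (C.htrans _ _ _ hlt h1)).2.2 hl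
  · -- u 1 k : acyclicity gives k < p
    have := C.hsce.acyclic 1 k p h1 (C.hsce.l_symm p 1 hl)
    exact C.hirr p (C.htrans _ _ _ hlt this)
  · -- l 1 k : p is between 1 and k
    exact hp (C.memBtwn H.one_mem hk (Ne.symm hk1)
      (Or.inr (Or.inr (Or.inl ⟨h1, Or.inl ⟨C.hsce.l_symm p 1 hl, hlt⟩⟩))))

/-- Kernel lemma D : `u p 1`, `lt k p` with `k ∈ H`, `p ∉ H` is impossible. -/
theorem Ctx.kerD (C : Ctx lt u l H) {p k : G} (hk : k ∈ H) (hp : p ∉ H)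
    (hu : u p 1) (hlt : lt k p) : False := by
  have hp1 : p ≠ 1 := fun h => hp (h ▸ H.one_mem)
  by_cases hk1 : k = 1
  · subst hk1
    exact ((C.hsce.exactly_one p 1 hp1).2.2.1 hlt).1 hu
  rcases (C.hsce.exactly_one 1 k (Ne.symm hk1)).1 with h1 | h1 | h1 | h1
  · -- 1 < k : 1 < p
    exact ((C.hsce.exactly_one p 1 hp1).2.2.1 (C.htrans _ _ _ h1 hlt)).1 hu
  · -- k < 1 : common lower bound k forces l p 1
    have hinc : Incomp lt p 1 := by
      obtain ⟨-, ha, hb, -⟩ := C.hsce.exactly_one p 1 hp1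
      exact ⟨hp1, fun h => (ha h).2.1 hu, fun h => (hb h).1 hu⟩
    have := C.hsce.l_of_lb p 1 hinc ⟨k, Or.inr hlt, Or.inr h1⟩
    exact (C.hsce.exactly_one p 1 hp1).2.2.2 hu this
  · -- u 1 k : p is between 1 and k
    exact hp (C.memBtwn H.one_mem hk (Ne.symm hk1)
      (Or.inr (Or.inr (Or.inr ⟨h1, Or.inl ⟨C.hsce.u_symm p 1 hu, hlt⟩⟩))))
  · -- l 1 k : acyclicity gives p < k
    have := C.hsce.acyclic 1 p k (C.hsce.u_symm p 1 hu) h1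
    exact C.hirr p (C.htrans _ _ _ this hlt)

/-- Kernel lemma A : `u p 1`, `lt p k` with `k ∈ H`, `p ∉ H` is impossible. -/
theorem Ctx.kerA (C : Ctx lt u l H) {p k : G} (hk : k ∈ H) (hp : p ∉ H)
    (hu : u p 1) (hlt : lt p k) : False := by
  have hp1 : p ≠ 1 := fun h => hp (h ▸ H.one_mem)
  by_cases hk1 : k = 1
  · subst hk1
    exact ((C.hsce.exactly_one p 1 hp1).2.1 hlt).2.1 hu
  have hqH : p⁻¹ * (k * p) ∈ H := by
    have := C.hN.conj_mem k hk p⁻¹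
    simpa [mul_assoc] using this
  have hq1 : (1 : G) ≠ p⁻¹ * (k * p) := by
    intro h
    apply hk1
    have : p * (1 : G) * p⁻¹ = p * (p⁻¹ * (k * p)) * p⁻¹ := by rw [← h]
    simpa [mul_assoc] using this.symm
  rcases (C.hsce.exactly_one 1 (p⁻¹ * (k * p)) hq1).1 with h1 | h1 | h1 | h1
  · -- lt 1 q : k⁻¹p is a common lower bound of p and 1
    have ha : lt (k⁻¹ * p) p := by
      have := C.hltinv (k⁻¹ * p) _ _ h1
      simpa [mul_assoc] using this
    have hb : lt (k⁻¹ * p) 1 := by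
      have := C.hltinv k⁻¹ _ _ hlt
      simpa [mul_assoc] using this
    have hinc : Incomp lt p 1 := by
      obtain ⟨-, hx, hy, -⟩ := C.hsce.exactly_one p 1 hp1
      exact ⟨hp1, fun h => (hx h).2.1 hu, fun h => (hy h).1 hu⟩
    have := C.hsce.l_of_lb p 1 hinc ⟨k⁻¹ * p, Or.inr ha, Or.inr hb⟩
    exact (C.hsce.exactly_one p 1 hp1).2.2.2 hu this
  · -- lt q 1 : kp < p < k but u (kp) k
    have ha : lt (k * p) p := by
      have := C.hltinv p _ _ h1
      simpa [mul_assoc] using this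
    have hb : lt (k * p) k := C.htrans _ _ _ ha hlt
    have hu2 : u (k * p) k := by
      have := C.huinv k _ _ hu
      simpa using this
    have hne : k * p ≠ k := fun h => hp1 (by
      have := mul_left_cancel (a := k) (by simpa using h)
      simpa using this)
    exact ((C.hsce.exactly_one (k * p) k hne).2.1 hb).2.1 hu2
  · -- u 1 q : k between p and kp
    have h2 : u p (k * p) := by
      have := C.huinv p _ _ h1
      simpa [mul_assoc] using this
    have h3 : u (k * p) k := by
      have := C.huinv k _ _ hu
      simpa using this
    have hb : Btwn lt u l p (k * p) k :=
      Or.inr (Or.inr (Or.inr ⟨h2, Or.inr ⟨h3, hlt⟩⟩))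
    have hb2 := C.btwn_inv p⁻¹ hb
    rw [inv_mul_cancel] at hb2
    have hmem : p⁻¹ * k ∈ H := C.memBtwn H.one_mem hqH hq1 hb2
    have : p⁻¹ ∈ H := by
      have := H.mul_mem hmem (H.inv_mem hk)
      simpa [mul_assoc] using this
    exact hp (by simpa using H.inv_mem this)
  · -- l 1 q : kp between 1 and k²
    have h2 : l p (k * p) := by
      have := C.hlinv p _ _ h1
      simpa [mul_assoc] using this
    have h3 : lt 1 (k * p) := C.hsce.acyclic p 1 (k * p) hu h2
    have h4 : lt (k * p) (k * k) := by
      have := C.hltinv k _ _ hlt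
      simpa using this
    have h5 : lt 1 (k * k) := C.htrans _ _ _ h3 h4
    have hne : (1 : G) ≠ k * k := fun h => C.hirr 1 (h ▸ h5)
    have hmem : k * p ∈ H :=
      C.memBtwn H.one_mem (H.mul_mem hk hk) hne (Or.inl ⟨h5, Or.inl ⟨h3, h4⟩⟩)
    exact hp (by simpa [mul_assoc] using H.mul_mem (H.inv_mem hk) hmem)

/-- Kernel lemma B : `l p 1`, `lt k p` with `k ∈ H`, `p ∉ H` is impossible. -/
theorem Ctx.kerB (C : Ctx lt u l H) {p k : G} (hk : k ∈ H) (hp : p ∉ H)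
    (hl : l p 1) (hlt : lt k p) : False := by
  have hp1 : p ≠ 1 := fun h => hp (h ▸ H.one_mem)
  by_cases hk1 : k = 1
  · subst hk1
    exact ((C.hsce.exactly_one p 1 hp1).2.2.1 hlt).2 hl
  have hqH : p⁻¹ * (k * p) ∈ H := by
    have := C.hN.conj_mem k hk p⁻¹
    simpa [mul_assoc] using this
  have hq1 : (1 : G) ≠ p⁻¹ * (k * p) := by
    intro h
    apply hk1
    have : p * (1 : G) * p⁻¹ = p * (p⁻¹ * (k * p)) * p⁻¹ := by rw [← h]
    simpa [mul_assoc] using this.symm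
  rcases (C.hsce.exactly_one 1 (p⁻¹ * (k * p)) hq1).1 with h1 | h1 | h1 | h1
  · -- lt 1 q : k < p < kp but l (kp) k
    have ha : lt p (k * p) := by
      have := C.hltinv p _ _ h1
      simpa [mul_assoc] using this
    have hb : lt k (k * p) := C.htrans _ _ _ hlt ha
    have hl2 : l (k * p) k := by
      have := C.hlinv k _ _ hl
      simpa using this
    have hne : k * p ≠ k := fun h => hp1 (by
      have := mul_left_cancel (a := k) (by simpa using h)
      simpa using this)
    exact ((C.hsce.exactly_one (k * p) k hne).2.2.1 hb).2 hl2
  · -- lt q 1 : k⁻¹p is a common upper bound of p and 1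
    have ha : lt p (k⁻¹ * p) := by
      have := C.hltinv (k⁻¹ * p) _ _ h1
      simpa [mul_assoc] using this
    have hb : lt 1 (k⁻¹ * p) := by
      have := C.hltinv k⁻¹ _ _ hlt
      simpa [mul_assoc] using this
    have hinc : Incomp lt p 1 := by
      obtain ⟨-, hx, hy, -⟩ := C.hsce.exactly_one p 1 hp1
      exact ⟨hp1, fun h => (hx h).2.2 hl, fun h => (hy h).2 hl⟩
    have := C.hsce.u_of_ub p 1 hinc ⟨k⁻¹ * p, Or.inr ha, Or.inr hb⟩
    exact (C.hsce.exactly_one p 1 hp1).2.2.2 this hl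
  · -- u 1 q : kp between k² and 1
    have h2 : u p (k * p) := by
      have := C.huinv p _ _ h1
      simpa [mul_assoc] using this
    have h3 : lt (k * p) 1 := C.hsce.acyclic p (k * p) 1 h2 hl
    have h4 : lt (k * k) (k * p) := by
      have := C.hltinv k _ _ hlt
      simpa using this
    have h5 : lt (k * k) 1 := C.htrans _ _ _ h4 h3
    have hne : k * k ≠ (1 : G) := fun h => C.hirr 1 (h ▸ h5)
    have hmem : k * p ∈ H :=
      C.memBtwn (H.mul_mem hk hk) H.one_mem hne (Or.inl ⟨h5, Or.inl ⟨h4, h3⟩⟩)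
    exact hp (by simpa [mul_assoc] using H.mul_mem (H.inv_mem hk) hmem)
  · -- l 1 q : k between p and kp
    have h2 : l p (k * p) := by
      have := C.hlinv p _ _ h1
      simpa [mul_assoc] using this
    have h3 : l (k * p) k := by
      have := C.hlinv k _ _ hl
      simpa using this
    have hb : Btwn lt u l p (k * p) k :=
      Or.inr (Or.inr (Or.inl ⟨h2, Or.inr ⟨h3, hlt⟩⟩))
    have hb2 := C.btwn_inv p⁻¹ hb
    rw [inv_mul_cancel] at hb2
    have hmem : p⁻¹ * k ∈ H := C.memBtwn H.one_mem hqH hq1 hb2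
    have : p⁻¹ ∈ H := by
      have := H.mul_mem hmem (H.inv_mem hk)
      simpa [mul_assoc] using this
    exact hp (by simpa using H.inv_mem this)

end Aux


section Aux2

variable {G : Type*} [Group G] {lt u l : G → G → Prop} {H : Subgroup G}

theorem Ctx.pre (_C : Ctx lt u l H) {a c d : G} (h1 : (c : G ⧸ H) = (d : G ⧸ H))
    (h2 : (a : G ⧸ H) ≠ (d : G ⧸ H)) : d⁻¹ * c ∈ H ∧ d⁻¹ * a ∉ H := by
  refine ⟨QuotientGroup.eq.1 h1.symm, fun hm => h2 ?_⟩
  exact (QuotientGroup.eq.2 hm).symm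

/-- Coset conflict (Lt, Gt): `a < c` and `d < a` with `c, d` in a coset not containing `a`. -/
theorem Ctx.bgLtGt (C : Ctx lt u l H) {a c d : G} (h1 : (c : G ⧸ H) = (d : G ⧸ H))
    (h2 : (a : G ⧸ H) ≠ (d : G ⧸ H)) (r1 : lt a c) (r2 : lt d a) : False := by
  obtain ⟨hk, hp⟩ := C.pre h1 h2
  exact C.kerF hk hp (by simpa using C.hltinv d⁻¹ _ _ r2) (C.hltinv d⁻¹ _ _ r1)

/-- Coset conflict (Lt, U). -/
theorem Ctx.bgLtU (C : Ctx lt u l H) {a c d : G} (h1 : (c : G ⧸ H) = (d : G ⧸ H))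
    (h2 : (a : G ⧸ H) ≠ (d : G ⧸ H)) (r1 : lt a c) (r2 : u a d) : False := by
  obtain ⟨hk, hp⟩ := C.pre h1 h2
  exact C.kerA hk hp (by simpa using C.huinv d⁻¹ _ _ r2) (C.hltinv d⁻¹ _ _ r1)

/-- Coset conflict (Lt, L). -/
theorem Ctx.bgLtL (C : Ctx lt u l H) {a c d : G} (h1 : (c : G ⧸ H) = (d : G ⧸ H))
    (h2 : (a : G ⧸ H) ≠ (d : G ⧸ H)) (r1 : lt a c) (r2 : l a d) : False := by
  obtain ⟨hk, hp⟩ := C.pre h1 h2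
  exact C.kerC hk hp (by simpa using C.hlinv d⁻¹ _ _ r2) (C.hltinv d⁻¹ _ _ r1)

/-- Coset conflict (Gt, U). -/
theorem Ctx.bgGtU (C : Ctx lt u l H) {a c d : G} (h1 : (c : G ⧸ H) = (d : G ⧸ H))
    (h2 : (a : G ⧸ H) ≠ (d : G ⧸ H)) (r1 : lt c a) (r2 : u a d) : False := by
  obtain ⟨hk, hp⟩ := C.pre h1 h2
  exact C.kerD hk hp (by simpa using C.huinv d⁻¹ _ _ r2) (C.hltinv d⁻¹ _ _ r1)

/-- Coset conflict (Gt, L). -/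
theorem Ctx.bgGtL (C : Ctx lt u l H) {a c d : G} (h1 : (c : G ⧸ H) = (d : G ⧸ H))
    (h2 : (a : G ⧸ H) ≠ (d : G ⧸ H)) (r1 : lt c a) (r2 : l a d) : False := by
  obtain ⟨hk, hp⟩ := C.pre h1 h2
  exact C.kerB hk hp (by simpa using C.hlinv d⁻¹ _ _ r2) (C.hltinv d⁻¹ _ _ r1)

/-- Coset conflict (U, L). -/
theorem Ctx.bgUL (C : Ctx lt u l H) {a c d : G} (h1 : (c : G ⧸ H) = (d : G ⧸ H))
    (h2 : (a : G ⧸ H) ≠ (d : G ⧸ H)) (r1 : u a c) (r2 : l a d) : False := by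
  obtain ⟨hk, hp⟩ := C.pre h1 h2
  exact C.kerE hk hp (by simpa using C.hlinv d⁻¹ _ _ r2) (C.huinv d⁻¹ _ _ r1)

theorem mk_mul_mem (H : Subgroup G) {g h0 : G} (hh0 : h0 ∈ H) :
    ((g * h0 : G) : G ⧸ H) = (g : G ⧸ H) :=
  QuotientGroup.eq.2 (by simpa [mul_assoc, mul_inv_rev] using H.inv_mem hh0)

/-- If `QRel lt` holds between two cosets then `lt` holds between any representatives. -/
theorem Ctx.typeLt (C : Ctx lt u l H) {x y : G ⧸ H} (h : QRel lt H x y)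
    (a b : G) (ha : (a : G ⧸ H) = x) (hb : (b : G ⧸ H) = y) : lt a b := by
  obtain ⟨hne, g1, g2, hg1, hg2, h0, hh0, hr⟩ := h
  have hc : ((g2 * h0 : G) : G ⧸ H) = y := (mk_mul_mem H hh0).trans hg2
  have hxb : (g1 : G ⧸ H) ≠ (b : G ⧸ H) := by rw [hg1, hb]; exact hne
  have hg1b : g1 ≠ b := fun h => hxb (by rw [h])
  -- Step 1 : lt g1 b
  have s1 : lt g1 b := by
    rcases (C.hsce.exactly_one g1 b hg1b).1 with h' | h' | h' | h'
    · exact h'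
    · exact absurd (C.bgLtGt (hc.trans hb.symm) hxb hr h') id
    · exact absurd (C.bgLtU (hc.trans hb.symm) hxb hr h') id
    · exact absurd (C.bgLtL (hc.trans hb.symm) hxb hr h') id
  -- Step 2 : lt a b
  have hg1a : (g1 : G ⧸ H) = (a : G ⧸ H) := hg1.trans ha.symm
  have hag1 : (a : G ⧸ H) = (g1 : G ⧸ H) := ha.trans hg1.symm
  have hbg1 : (b : G ⧸ H) ≠ (g1 : G ⧸ H) := by rw [hb, hg1]; exact hne.symm
  have hba : (b : G ⧸ H) ≠ (a : G ⧸ H) := by rw [hb, ha]; exact hne.symm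
  have hab : a ≠ b := fun h => hba (by rw [h])
  rcases (C.hsce.exactly_one a b hab).1 with h' | h' | h' | h'
  · exact h'
  · exact absurd (C.bgLtGt hag1 hbg1 h' s1) id
  · exact absurd (C.bgGtU hg1a hba s1 (C.hsce.u_symm a b h')) id
  · exact absurd (C.bgGtL hg1a hba s1 (C.hsce.l_symm a b h')) id

/-- If `QRel u` holds between two cosets then `u` holds between any representatives. -/
theorem Ctx.typeU (C : Ctx lt u l H) {x y : G ⧸ H} (h : QRel u H x y)
    (a b : G) (ha : (a : G ⧸ H) = x) (hb : (b : G ⧸ H) = y) : u a b := by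
  obtain ⟨hne, g1, g2, hg1, hg2, h0, hh0, hr⟩ := h
  have hc : ((g2 * h0 : G) : G ⧸ H) = y := (mk_mul_mem H hh0).trans hg2
  have hxb : (g1 : G ⧸ H) ≠ (b : G ⧸ H) := by rw [hg1, hb]; exact hne
  have hg1b : g1 ≠ b := fun h => hxb (by rw [h])
  have hxc : (g1 : G ⧸ H) ≠ ((g2 * h0 : G) : G ⧸ H) := by rw [hg1, hc]; exact hne
  -- Step 1 : u g1 b
  have s1 : u g1 b := by
    rcases (C.hsce.exactly_one g1 b hg1b).1 with h' | h' | h' | h'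
    · exact absurd (C.bgLtU (hb.trans hc.symm) hxc h' hr) id
    · exact absurd (C.bgGtU (hb.trans hc.symm) hxc h' hr) id
    · exact h'
    · exact absurd (C.bgUL (hc.trans hb.symm) hxb hr h') id
  -- Step 2 : u a b
  have hg1a : (g1 : G ⧸ H) = (a : G ⧸ H) := hg1.trans ha.symm
  have hag1 : (a : G ⧸ H) = (g1 : G ⧸ H) := ha.trans hg1.symm
  have hbg1 : (b : G ⧸ H) ≠ (g1 : G ⧸ H) := by rw [hb, hg1]; exact hne.symm
  have hba : (b : G ⧸ H) ≠ (a : G ⧸ H) := by rw [hb, ha]; exact hne.symm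
  have hab : a ≠ b := fun h => hba (by rw [h])
  have s1' : u b g1 := C.hsce.u_symm g1 b s1
  rcases (C.hsce.exactly_one a b hab).1 with h' | h' | h' | h'
  · exact absurd (C.bgGtU hag1 hbg1 h' s1') id
  · exact absurd (C.bgLtU hag1 hbg1 h' s1') id
  · exact h'
  · exact absurd (C.bgUL hg1a hba s1' (C.hsce.l_symm a b h')) id

/-- If `QRel l` holds between two cosets then `l` holds between any representatives. -/
theorem Ctx.typeL (C : Ctx lt u l H) {x y : G ⧸ H} (h : QRel l H x y)
    (a b : G) (ha : (a : G ⧸ H) = x) (hb : (b : G ⧸ H) = y) : l a b := by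
  obtain ⟨hne, g1, g2, hg1, hg2, h0, hh0, hr⟩ := h
  have hc : ((g2 * h0 : G) : G ⧸ H) = y := (mk_mul_mem H hh0).trans hg2
  have hxb : (g1 : G ⧸ H) ≠ (b : G ⧸ H) := by rw [hg1, hb]; exact hne
  have hg1b : g1 ≠ b := fun h => hxb (by rw [h])
  have hxc : (g1 : G ⧸ H) ≠ ((g2 * h0 : G) : G ⧸ H) := by rw [hg1, hc]; exact hne
  -- Step 1 : l g1 b
  have s1 : l g1 b := by
    rcases (C.hsce.exactly_one g1 b hg1b).1 with h' | h' | h' | h'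
    · exact absurd (C.bgLtL (hb.trans hc.symm) hxc h' hr) id
    · exact absurd (C.bgGtL (hb.trans hc.symm) hxc h' hr) id
    · exact absurd (C.bgUL (hb.trans hc.symm) hxc h' hr) id
    · exact h'
  -- Step 2 : l a b
  have hg1a : (g1 : G ⧸ H) = (a : G ⧸ H) := hg1.trans ha.symm
  have hag1 : (a : G ⧸ H) = (g1 : G ⧸ H) := ha.trans hg1.symm
  have hbg1 : (b : G ⧸ H) ≠ (g1 : G ⧸ H) := by rw [hb, hg1]; exact hne.symm
  have hba : (b : G ⧸ H) ≠ (a : G ⧸ H) := by rw [hb, ha]; exact hne.symm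
  have hab : a ≠ b := fun h => hba (by rw [h])
  have s1' : l b g1 := C.hsce.l_symm g1 b s1
  rcases (C.hsce.exactly_one a b hab).1 with h' | h' | h' | h'
  · exact absurd (C.bgGtL hag1 hbg1 h' s1') id
  · exact absurd (C.bgLtL hag1 hbg1 h' s1') id
  · exact absurd (C.bgUL hag1 hbg1 (C.hsce.u_symm a b h') s1') id
  · exact h'

/-- Construct a `QRel` from a relation between representatives. -/
theorem mkQ (r : G → G → Prop) {a b : G} (hne : (a : G ⧸ H) ≠ (b : G ⧸ H)) (hr : r a b) :
    QRel r H (a : G ⧸ H) (b : G ⧸ H) :=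
  ⟨hne, a, b, rfl, rfl, 1, H.one_mem, by simpa using hr⟩

end Aux2


/-- The induced relations make `G ⧸ H` a group with a left-invariant partial
order and a left-invariant simply connected extension. -/
theorem stmt10 {G : Type*} [Group G] (lt u l : G → G → Prop)
    (hirr : ∀ x : G, ¬ lt x x)
    (htrans : ∀ x y z : G, lt x y → lt y z → lt x z)
    (hltinv : LeftInvariant lt) (huinv : LeftInvariant u) (hlinv : LeftInvariant l)
    (hsce : IsSCExt lt u l)
    (H : Subgroup G) [H.Normal]
    (hcc : CompletelyConvex lt u l H) :
    (∀ x : G ⧸ H, ¬ QRel lt H x x) ∧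
    (∀ x y z : G ⧸ H, QRel lt H x y → QRel lt H y z → QRel lt H x z) ∧
    LeftInvariant (QRel lt H) ∧
    LeftInvariant (QRel u H) ∧
    LeftInvariant (QRel l H) ∧
    IsSCExt (QRel lt H) (QRel u H) (QRel l H) := by
  have C : Ctx lt u l H := ⟨hirr, htrans, hltinv, huinv, hlinv, hsce, inferInstance, hcc⟩
  have qinv : ∀ r : G → G → Prop, LeftInvariant r → LeftInvariant (QRel r H) := by
    intro r hr f x y hxy
    obtain ⟨hne, g1, g2, h1, h2, h0, hh0, hrel⟩ := hxy
    obtain ⟨f0, rfl⟩ := QuotientGroup.mk_surjective f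
    refine ⟨fun hEq => hne (mul_left_cancel hEq), f0 * g1, f0 * g2, ?_, ?_, h0, hh0, ?_⟩
    · rw [QuotientGroup.mk_mul, h1]
    · rw [QuotientGroup.mk_mul, h2]
    · simpa [mul_assoc] using hr f0 _ _ hrel
  refine ⟨fun x h => h.1 rfl, ?_, qinv lt hltinv, qinv u huinv, qinv l hlinv,
    ?_, ?_, ?_, ?_, ?_, ?_⟩
  · -- transitivity
    intro x y z hxy hyz
    obtain ⟨a, rfl⟩ := QuotientGroup.mk_surjective x
    obtain ⟨b, rfl⟩ := QuotientGroup.mk_surjective y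
    have hab := C.typeLt hxy a b rfl rfl
    by_cases hxz : (a : G ⧸ H) = z
    · exact absurd (htrans a b a hab (C.typeLt hyz b a rfl hxz)) (fun h => hirr a h)
    · obtain ⟨c, rfl⟩ := QuotientGroup.mk_surjective z
      exact mkQ lt hxz (htrans a b c hab (C.typeLt hyz b c rfl rfl))
  · -- u symm
    rintro x y ⟨hne, g1, g2, h1, h2, h0, hh0, hr⟩
    exact ⟨hne.symm, g2 * h0, g1, (mk_mul_mem H hh0).trans h2, h1, 1, H.one_mem,
      by simpa using hsce.u_symm _ _ hr⟩
  · -- l symm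
    rintro x y ⟨hne, g1, g2, h1, h2, h0, hh0, hr⟩
    exact ⟨hne.symm, g2 * h0, g1, (mk_mul_mem H hh0).trans h2, h1, 1, H.one_mem,
      by simpa using hsce.l_symm _ _ hr⟩
  · -- exactly one
    intro x y hne
    obtain ⟨a, rfl⟩ := QuotientGroup.mk_surjective x
    obtain ⟨b, rfl⟩ := QuotientGroup.mk_surjective y
    have hab : a ≠ b := fun h => hne (by rw [h])
    have EO := hsce.exactly_one a b hab
    refine ⟨?_, ?_, ?_, ?_⟩
    · rcases EO.1 with h | h | h | h
      · exact Or.inl (mkQ lt hne h)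
      · exact Or.inr (Or.inl (mkQ lt hne.symm h))
      · exact Or.inr (Or.inr (Or.inl (mkQ u hne h)))
      · exact Or.inr (Or.inr (Or.inr (mkQ l hne h)))
    · intro h'
      have p1 := C.typeLt h' a b rfl rfl
      exact ⟨fun h2 => hirr a (htrans _ _ _ p1 (C.typeLt h2 b a rfl rfl)),
             fun h2 => (EO.2.1 p1).2.1 (C.typeU h2 a b rfl rfl),
             fun h2 => (EO.2.1 p1).2.2 (C.typeL h2 a b rfl rfl)⟩
    · intro h'
      have p1 := C.typeLt h' b a rfl rfl
      exact ⟨fun h2 => (EO.2.2.1 p1).1 (C.typeU h2 a b rfl rfl),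
             fun h2 => (EO.2.2.1 p1).2 (C.typeL h2 a b rfl rfl)⟩
    · intro h' h2
      exact EO.2.2.2 (C.typeU h' a b rfl rfl) (C.typeL h2 a b rfl rfl)
  · -- u_of_ub
    intro x y hinc hub
    obtain ⟨z, hxz, hyz⟩ := hub
    have hne := hinc.1
    obtain ⟨a, rfl⟩ := QuotientGroup.mk_surjective x
    obtain ⟨b, rfl⟩ := QuotientGroup.mk_surjective y
    have hab : a ≠ b := fun h => hne (by rw [h])
    have EO := hsce.exactly_one a b hab
    rcases EO.1 with h | h | h | h
    · exact absurd (mkQ lt hne h) hinc.2.1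
    · exact absurd (mkQ lt hne.symm h) hinc.2.2
    · exact mkQ u hne h
    · exfalso
      have hincG : Incomp lt a b :=
        ⟨hab, fun h2 => (EO.2.1 h2).2.2 h, fun h2 => (EO.2.2.1 h2).2 h⟩
      rcases hxz with heq | hxz
      · rcases hyz with heq2 | hyz
        · exact hne (heq.trans heq2.symm)
        · exact hincG.2.2 (C.typeLt hyz b a rfl heq)
      · rcases hyz with heq2 | hyz
        · exact hinc.2.1 (by rwa [← heq2] at hxz)
        · obtain ⟨c, rfl⟩ := QuotientGroup.mk_surjective z
          have := hsce.u_of_ub a b hincG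
            ⟨c, Or.inr (C.typeLt hxz a c rfl rfl), Or.inr (C.typeLt hyz b c rfl rfl)⟩
          exact EO.2.2.2 this h
  · -- l_of_lb
    intro x y hinc hlb
    obtain ⟨z, hzx, hzy⟩ := hlb
    have hne := hinc.1
    obtain ⟨a, rfl⟩ := QuotientGroup.mk_surjective x
    obtain ⟨b, rfl⟩ := QuotientGroup.mk_surjective y
    have hab : a ≠ b := fun h => hne (by rw [h])
    have EO := hsce.exactly_one a b hab
    rcases EO.1 with h | h | h | h
    · exact absurd (mkQ lt hne h) hinc.2.1
    · exact absurd (mkQ lt hne.symm h) hinc.2.2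
    · exfalso
      have hincG : Incomp lt a b :=
        ⟨hab, fun h2 => (EO.2.1 h2).2.1 h, fun h2 => (EO.2.2.1 h2).1 h⟩
      rcases hzx with heq | hzx
      · rcases hzy with heq2 | hzy
        · exact hne (heq.symm.trans heq2)
        · exact hincG.2.1 (C.typeLt hzy a b heq.symm rfl)
      · rcases hzy with heq2 | hzy
        · exact hincG.2.2 (C.typeLt hzx b a heq2.symm rfl)
        · obtain ⟨c, rfl⟩ := QuotientGroup.mk_surjective z
          have := hsce.l_of_lb a b hincG
            ⟨c, Or.inr (C.typeLt hzx c a rfl rfl), Or.inr (C.typeLt hzy c b rfl rfl)⟩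
          exact EO.2.2.2 h this
    · exact mkQ l hne h
  · -- acyclic
    intro x y z hu' hl'
    obtain ⟨a, rfl⟩ := QuotientGroup.mk_surjective x
    obtain ⟨b, rfl⟩ := QuotientGroup.mk_surjective y
    by_cases hyz : (b : G ⧸ H) = z
    · exfalso
      have h1 := C.typeU hu' a b rfl rfl
      have h2 := C.typeL hl' a b rfl hyz
      have hab : a ≠ b := fun h => hu'.1 (by rw [h])
      exact (hsce.exactly_one a b hab).2.2.2 h1 h2
    · obtain ⟨c, rfl⟩ := QuotientGroup.mk_surjective z
      exact mkQ lt hyz (hsce.acyclic a b c (C.typeU hu' a b rfl rfl) (C.typeL hl' a c rfl rfl))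


end PaperSC
end

section
/- Let G be a group with a left-invariant partial order < admitting a left-invariant simply connected extension (∼_u, ∼_l), and let H be a completely convex normal subgroup of G. Equip G/H with the induced left-invariant partial order <' and left-invariant simply connected extension (∼_u', ∼_l'), and form between-sets B in G/H using these relations. If g, f, k ∈ G and gH ∈ B_{fH,kH} (computed in G/H), then there exist h, h' ∈ H such that gh' ∈ B_{f,kh} (computed in G). -/
open Pointwise

namespace PaperSC

variable {S : Type*}

section Aux

set_option linter.unusedSectionVars false

variable {G : Type*} [Group G] {r lt u l : G → G → Prop} {H : Subgroup G}

lemma coset_mul_mem [H.Normal] {b c : G} (hc : c ∈ H) :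
    ((b * c : G) : G ⧸ H) = (b : G ⧸ H) := by
  rw [QuotientGroup.eq]
  simpa [mul_inv_rev, mul_assoc] using H.inv_mem hc

lemma ne_mul_mul [H.Normal] {a b c c' : G} (hc : c ∈ H) (hc' : c' ∈ H)
    (hne : (a : G ⧸ H) ≠ (b : G ⧸ H)) : a * c ≠ b * c' := by
  intro h
  apply hne
  have h1 : ((a * c : G) : G ⧸ H) = ((b * c' : G) : G ⧸ H) := by rw [h]
  rwa [coset_mul_mem hc, coset_mul_mem hc'] at h1

lemma ne_of_coset [H.Normal] {a b c : G} (hc : c ∈ H)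
    (hne : (a : G ⧸ H) ≠ (b : G ⧸ H)) : a ≠ b * c := by
  have := ne_mul_mul (H := H) H.one_mem hc hne
  simpa using this

lemma shift_left [H.Normal] (hr : LeftInvariant r)
    {x y c₁ c₂ c₁' : G} (hc₁ : c₁ ∈ H) (hc₂ : c₂ ∈ H) (hc₁' : c₁' ∈ H)
    (h : r (x * c₁) (y * c₂)) : ∃ h' ∈ H, r (x * c₁') (y * h') := by
  have hdH : x * (c₁' * c₁⁻¹) * x⁻¹ ∈ H :=
    Subgroup.Normal.conj_mem ‹H.Normal› _ (H.mul_mem hc₁' (H.inv_mem hc₁)) x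
  have hconj : y⁻¹ * (x * (c₁' * c₁⁻¹) * x⁻¹) * y ∈ H := by
    have := Subgroup.Normal.conj_mem ‹H.Normal› _ hdH y⁻¹
    simpa [mul_assoc] using this
  refine ⟨y⁻¹ * (x * (c₁' * c₁⁻¹) * x⁻¹) * y * c₂, H.mul_mem hconj hc₂, ?_⟩
  have key := hr (x * (c₁' * c₁⁻¹) * x⁻¹) _ _ h
  have e1 : x * (c₁' * c₁⁻¹) * x⁻¹ * (x * c₁) = x * c₁' := by group
  have e2 : x * (c₁' * c₁⁻¹) * x⁻¹ * (y * c₂)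
      = y * (y⁻¹ * (x * (c₁' * c₁⁻¹) * x⁻¹) * y * c₂) := by group
  rwa [e1, e2] at key

lemma shift_right [H.Normal] (hr : LeftInvariant r)
    {x y c₁ c₂ c₂' : G} (hc₁ : c₁ ∈ H) (hc₂ : c₂ ∈ H) (hc₂' : c₂' ∈ H)
    (h : r (x * c₁) (y * c₂)) : ∃ h' ∈ H, r (x * h') (y * c₂') := by
  have hdH : y * (c₂' * c₂⁻¹) * y⁻¹ ∈ H :=
    Subgroup.Normal.conj_mem ‹H.Normal› _ (H.mul_mem hc₂' (H.inv_mem hc₂)) y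
  have hconj : x⁻¹ * (y * (c₂' * c₂⁻¹) * y⁻¹) * x ∈ H := by
    have := Subgroup.Normal.conj_mem ‹H.Normal› _ hdH x⁻¹
    simpa [mul_assoc] using this
  refine ⟨x⁻¹ * (y * (c₂' * c₂⁻¹) * y⁻¹) * x * c₁, H.mul_mem hconj hc₁, ?_⟩
  have key := hr (y * (c₂' * c₂⁻¹) * y⁻¹) _ _ h
  have e1 : y * (c₂' * c₂⁻¹) * y⁻¹ * (x * c₁)
      = x * (x⁻¹ * (y * (c₂' * c₂⁻¹) * y⁻¹) * x * c₁) := by group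
  have e2 : y * (c₂' * c₂⁻¹) * y⁻¹ * (y * c₂) = y * c₂' := by group
  rwa [e1, e2] at key

lemma qrel_elim [H.Normal] (hr : LeftInvariant r) {a b : G}
    (h : QRel r H (a : G ⧸ H) (b : G ⧸ H)) : ∃ c ∈ H, r a (b * c) := by
  obtain ⟨-, g1, g2, h1, h2, h0, h0H, hrel⟩ := h
  have hp : a⁻¹ * g1 ∈ H := by
    have := QuotientGroup.eq.mp h1
    simpa using H.inv_mem this
  have hq : b⁻¹ * (g2 * h0) ∈ H := by
    have hb : b⁻¹ * g2 ∈ H := by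
      have := QuotientGroup.eq.mp h2
      simpa using H.inv_mem this
    simpa [mul_assoc] using H.mul_mem hb h0H
  have hrel' : r (a * (a⁻¹ * g1)) (b * (b⁻¹ * (g2 * h0))) := by
    simpa [mul_assoc] using hrel
  obtain ⟨c, hcH, hc⟩ := shift_left hr hp hq H.one_mem hrel'
  exact ⟨c, hcH, by simpa using hc⟩

lemma qrel_elim' [H.Normal] (hr : LeftInvariant r) {a b : G}
    (h : QRel r H (a : G ⧸ H) (b : G ⧸ H)) : ∃ c ∈ H, r (a * c) b := by
  obtain ⟨c, hcH, hc⟩ := qrel_elim hr h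
  have hc' : r (a * 1) (b * c) := by simpa using hc
  obtain ⟨c', hc'H, hcc⟩ := shift_right hr H.one_mem hcH H.one_mem hc'
  exact ⟨c', hc'H, by simpa using hcc⟩

lemma eo_of_l (hsce : IsSCExt lt u l) {x y : G} (hxy : x ≠ y) (h : l x y) :
    ¬ lt x y ∧ ¬ lt y x ∧ ¬ u x y := by
  obtain ⟨-, h1, h2, h3⟩ := hsce.exactly_one x y hxy
  exact ⟨fun hp => (h1 hp).2.2 h, fun hq => (h2 hq).2 h, fun hr' => h3 hr' h⟩

lemma eo_of_u (hsce : IsSCExt lt u l) {x y : G} (hxy : x ≠ y) (h : u x y) :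
    ¬ lt x y ∧ ¬ lt y x ∧ ¬ l x y := by
  obtain ⟨-, h1, h2, h3⟩ := hsce.exactly_one x y hxy
  exact ⟨fun hp => (h1 hp).2.1 h, fun hq => (h2 hq).1 h, h3 h⟩

lemma lem_L (hirr : ∀ x : G, ¬ lt x x)
    (htrans : ∀ x y z : G, lt x y → lt y z → lt x z) (hsce : IsSCExt lt u l)
    {a b c : G} (hab : a ≠ b) (hac : a ≠ c) (h1 : l a b) (h2 : lt b c) : l a c := by
  obtain ⟨hnlt1, hnlt2, hnu⟩ := eo_of_l hsce hab h1
  rcases (hsce.exactly_one a c hac).1 with h | h | h | h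
  · exact absurd (hsce.u_of_ub a b ⟨hab, hnlt1, hnlt2⟩ ⟨c, Or.inr h, Or.inr h2⟩) hnu
  · exact absurd (htrans _ _ _ h2 h) hnlt2
  · exact absurd (htrans _ _ _ h2 (hsce.acyclic a c b h h1)) (hirr b)
  · exact h

lemma lem_U (hirr : ∀ x : G, ¬ lt x x)
    (htrans : ∀ x y z : G, lt x y → lt y z → lt x z) (hsce : IsSCExt lt u l)
    {a b c : G} (hab : a ≠ b) (hac : a ≠ c) (h1 : u a b) (h2 : lt c b) : u a c := by
  obtain ⟨hnlt1, hnlt2, hnl⟩ := eo_of_u hsce hab h1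
  rcases (hsce.exactly_one a c hac).1 with h | h | h | h
  · exact absurd (htrans _ _ _ h h2) hnlt1
  · exact absurd (hsce.l_of_lb a b ⟨hab, hnlt1, hnlt2⟩ ⟨c, Or.inr h, Or.inr h2⟩) hnl
  · exact h
  · exact absurd (htrans _ _ _ (hsce.acyclic a b c h1 h) h2) (hirr b)

end Aux

/-- If `gH ∈ B_{fH,kH}` (computed in `G ⧸ H`), then `gh' ∈ B_{f,kh}` (computed
in `G`) for some `h, h' ∈ H`. -/
theorem stmt13 {G : Type*} [Group G] (lt u l : G → G → Prop)
    (hirr : ∀ x : G, ¬ lt x x)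
    (htrans : ∀ x y z : G, lt x y → lt y z → lt x z)
    (hltinv : LeftInvariant lt) (huinv : LeftInvariant u) (hlinv : LeftInvariant l)
    (hsce : IsSCExt lt u l)
    (H : Subgroup G) [H.Normal]
    (hcc : CompletelyConvex lt u l H)
    (g f k : G)
    (hmem : (g : G ⧸ H) ∈
      BSet (QRel lt H) (QRel u H) (QRel l H) (f : G ⧸ H) (k : G ⧸ H)) :
    ∃ h ∈ H, ∃ h' ∈ H, g * h' ∈ BSet lt u l f (k * h) := by
  rcases hmem with hg | ⟨hne, hbtwn⟩
  · -- g is one of the endpoints in the quotient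
    rcases hg with hg | hg
    · -- ↑g = ↑f
      refine ⟨1, H.one_mem, g⁻¹ * f, ?_, ?_⟩
      · exact QuotientGroup.eq.mp hg
      · have : g * (g⁻¹ * f) = f := by group
        rw [this]
        exact Set.mem_union_left _ (Set.mem_insert _ _)
    · -- ↑g = ↑k
      have hg' : (g : G ⧸ H) = (k : G ⧸ H) := hg
      refine ⟨k⁻¹ * g, ?_, 1, H.one_mem, ?_⟩
      · have := QuotientGroup.eq.mp hg'
        simpa using H.inv_mem this
      · have : g * 1 = k * (k⁻¹ * g) := by group
        rw [this]
        exact Set.mem_union_left _ (Set.mem_insert_of_mem _ rfl)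
  · -- betweenness case
    rcases hbtwn with ⟨hfk, hmid⟩ | ⟨hkf, hmid⟩ | ⟨hfk, hmid⟩ | ⟨hfk, hmid⟩
    · -- Case 1 : ↑f <' ↑k
      rcases hmid with ⟨hfg, hgk⟩ | ⟨hfg, hgk⟩
      · -- 1a : f <' g <' k
        obtain ⟨c₁, hc₁, hlt1⟩ := qrel_elim hltinv hfg
        obtain ⟨c₂, hc₂, hlt2⟩ := qrel_elim hltinv hgk
        have hlt2' : lt (g * 1) (k * c₂) := by simpa using hlt2
        obtain ⟨h, hH, hlt3⟩ := shift_left hltinv H.one_mem hc₂ hc₁ hlt2'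
        refine ⟨h, hH, c₁, hc₁, Set.mem_union_right _ ⟨ne_of_coset hH hne, ?_⟩⟩
        exact Or.inl ⟨htrans _ _ _ hlt1 hlt3, Or.inl ⟨hlt1, hlt3⟩⟩
      · -- 1b : f ∼ᵤ' g, g ∼ₗ' k
        obtain ⟨c₁, hc₁, hu1⟩ := qrel_elim huinv hfg
        obtain ⟨c₂, hc₂, hl2⟩ := qrel_elim hlinv hgk
        have hl2' : l (g * 1) (k * c₂) := by simpa using hl2
        obtain ⟨h, hH, hl3⟩ := shift_left hlinv H.one_mem hc₂ hc₁ hl2'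
        have hltfk : lt f (k * h) := hsce.acyclic _ _ _ (hsce.u_symm _ _ hu1) hl3
        refine ⟨h, hH, c₁, hc₁, Set.mem_union_right _ ⟨ne_of_coset hH hne, ?_⟩⟩
        exact Or.inl ⟨hltfk, Or.inr ⟨hu1, hl3⟩⟩
    · -- Case 2 : ↑k <' ↑f
      rcases hmid with ⟨hkg, hgf⟩ | ⟨hkg, hgf⟩
      · -- 2a : k <' g <' f
        obtain ⟨c₂, hc₂, hlt2⟩ := qrel_elim' hltinv hgf
        obtain ⟨c₁, hc₁, hlt1⟩ := qrel_elim hltinv hkg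
        have hlt1' : lt (k * 1) (g * c₁) := by simpa using hlt1
        obtain ⟨h, hH, hlt3⟩ := shift_right hltinv H.one_mem hc₁ hc₂ hlt1'
        refine ⟨h, hH, c₂, hc₂, Set.mem_union_right _ ⟨ne_of_coset hH hne, ?_⟩⟩
        exact Or.inr (Or.inl ⟨htrans _ _ _ hlt3 hlt2, Or.inl ⟨hlt3, hlt2⟩⟩)
      · -- 2b : k ∼ᵤ' g, g ∼ₗ' f
        obtain ⟨c₂, hc₂, hl2⟩ := qrel_elim' hlinv hgf
        obtain ⟨c₁, hc₁, hu1⟩ := qrel_elim huinv hkg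
        have hu1' : u (k * 1) (g * c₁) := by simpa using hu1
        obtain ⟨h, hH, hu3⟩ := shift_right huinv H.one_mem hc₁ hc₂ hu1'
        have hltkf : lt (k * h) f := hsce.acyclic _ _ _ (hsce.u_symm _ _ hu3) hl2
        refine ⟨h, hH, c₂, hc₂, Set.mem_union_right _ ⟨ne_of_coset hH hne, ?_⟩⟩
        exact Or.inr (Or.inl ⟨hltkf, Or.inr ⟨hu3, hl2⟩⟩)
    · -- Case 3 : ↑f ∼ₗ' ↑k
      rcases hmid with ⟨hfg, hgk⟩ | ⟨hkg, hgf⟩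
      · -- 3a : f ∼ₗ' g, g <' k
        obtain ⟨c₁, hc₁, hl1⟩ := qrel_elim hlinv hfg
        obtain ⟨c₂, hc₂, hlt2⟩ := qrel_elim hltinv hgk
        have hlt2' : lt (g * 1) (k * c₂) := by simpa using hlt2
        obtain ⟨h, hH, hlt3⟩ := shift_left hltinv H.one_mem hc₂ hc₁ hlt2'
        have hlfk : l f (k * h) :=
          lem_L hirr htrans hsce (ne_of_coset hc₁ hfg.1) (ne_of_coset hH hne) hl1 hlt3
        refine ⟨h, hH, c₁, hc₁, Set.mem_union_right _ ⟨ne_of_coset hH hne, ?_⟩⟩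
        exact Or.inr (Or.inr (Or.inl ⟨hlfk, Or.inl ⟨hl1, hlt3⟩⟩))
      · -- 3b : k ∼ₗ' g, g <' f
        obtain ⟨c₂, hc₂, hlt2⟩ := qrel_elim' hltinv hgf
        obtain ⟨c₁, hc₁, hl1⟩ := qrel_elim hlinv hkg
        have hl1' : l (k * 1) (g * c₁) := by simpa using hl1
        obtain ⟨h, hH, hl3⟩ := shift_right hlinv H.one_mem hc₁ hc₂ hl1'
        have hkhne : (k * h : G) ≠ g * c₂ := ne_mul_mul hH hc₂ hkg.1
        have hkhf : (k * h : G) ≠ f := (ne_of_coset hH hne).symm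
        have hlkf : l (k * h) f := lem_L hirr htrans hsce hkhne hkhf hl3 hlt2
        refine ⟨h, hH, c₂, hc₂, Set.mem_union_right _ ⟨ne_of_coset hH hne, ?_⟩⟩
        exact Or.inr (Or.inr (Or.inl ⟨hsce.l_symm _ _ hlkf, Or.inr ⟨hl3, hlt2⟩⟩))
    · -- Case 4 : ↑f ∼ᵤ' ↑k
      rcases hmid with ⟨hfg, hkg⟩ | ⟨hkg, hfg⟩
      · -- 4a : f ∼ᵤ' g, k <' g
        obtain ⟨c₁, hc₁, hu1⟩ := qrel_elim huinv hfg
        obtain ⟨c₂, hc₂, hlt2⟩ := qrel_elim hltinv hkg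
        have hlt2' : lt (k * 1) (g * c₂) := by simpa using hlt2
        obtain ⟨h, hH, hlt3⟩ := shift_right hltinv H.one_mem hc₂ hc₁ hlt2'
        have hufk : u f (k * h) :=
          lem_U hirr htrans hsce (ne_of_coset hc₁ hfg.1) (ne_of_coset hH hne) hu1 hlt3
        refine ⟨h, hH, c₁, hc₁, Set.mem_union_right _ ⟨ne_of_coset hH hne, ?_⟩⟩
        exact Or.inr (Or.inr (Or.inr ⟨hufk, Or.inl ⟨hu1, hlt3⟩⟩))
      · -- 4b : k ∼ᵤ' g, f <' g
        obtain ⟨c₂, hc₂, hlt2⟩ := qrel_elim hltinv hfg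
        obtain ⟨c₁, hc₁, hu1⟩ := qrel_elim huinv hkg
        have hu1' : u (k * 1) (g * c₁) := by simpa using hu1
        obtain ⟨h, hH, hu3⟩ := shift_right huinv H.one_mem hc₁ hc₂ hu1'
        have hkhne : (k * h : G) ≠ g * c₂ := ne_mul_mul hH hc₂ hkg.1
        have hkhf : (k * h : G) ≠ f := (ne_of_coset hH hne).symm
        have hukf : u (k * h) f := lem_U hirr htrans hsce hkhne hkhf hu3 hlt2
        refine ⟨h, hH, c₂, hc₂, Set.mem_union_right _ ⟨ne_of_coset hH hne, ?_⟩⟩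
        exact Or.inr (Or.inr (Or.inr ⟨hsce.u_symm _ _ hukf, Or.inr ⟨hu3, hlt2⟩⟩))

end PaperSC
end

section
/- Let G be a group and let P, L, U ⊆ G be subsets satisfying: (1) P ∩ P⁻¹ = ∅, L⁻¹ = L, and U⁻¹ = U; (2) P·P ⊆ P; (3) L·P ⊆ L; (4) P·U ⊆ U; (5) U·L ⊆ P; (6) G is the disjoint union G = P ⊔ P⁻¹ ⊔ U ⊔ L ⊔ {e}. If moreover G = P ∪ P⁻¹ ∪ (P·P⁻¹) ∪ (P⁻¹·P), then the left-invariant partial order on G defined by g < h iff g⁻¹h ∈ P makes G a simply connected poset (i.e., this partial order is strongly connected and acyclic). -/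
open Pointwise

namespace PaperSC

variable {S : Type*}

/-- If `P, L, U` satisfy (1)-(6) and moreover
`G = P ∪ P⁻¹ ∪ (P·P⁻¹) ∪ (P⁻¹·P)`, then the left-invariant partial order `g < h ↔ g⁻¹h ∈ P`
makes `G` a simply connected poset (strongly connected and acyclic). -/
theorem stmt15 {G : Type*} [Group G] (P L U : Set G)
    (h1P : P ∩ P⁻¹ = ∅) (h1L : L⁻¹ = L) (h1U : U⁻¹ = U)
    (h2 : P * P ⊆ P) (h3 : L * P ⊆ L) (h4 : P * U ⊆ U) (h5 : U * L ⊆ P)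
    (h6cover : ∀ g : G, g ∈ P ∨ g ∈ P⁻¹ ∨ g ∈ U ∨ g ∈ L ∨ g = 1)
    (h6a : P ∩ U = ∅) (h6b : P ∩ L = ∅) (h6c : P⁻¹ ∩ U = ∅) (h6d : P⁻¹ ∩ L = ∅)
    (h6e : U ∩ L = ∅) (h6f : (1 : G) ∉ P) (h6g : (1 : G) ∉ P⁻¹)
    (h6h : (1 : G) ∉ U) (h6i : (1 : G) ∉ L)
    (hdir : ∀ g : G, g ∈ P ∨ g ∈ P⁻¹ ∨ g ∈ P * P⁻¹ ∨ g ∈ P⁻¹ * P) :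
    (∀ x : G, ¬ (fun g h : G => g⁻¹ * h ∈ P) x x) ∧
    (∀ x y z : G, (fun g h : G => g⁻¹ * h ∈ P) x y → (fun g h : G => g⁻¹ * h ∈ P) y z →
      (fun g h : G => g⁻¹ * h ∈ P) x z) ∧
    LeftInvariant (fun g h : G => g⁻¹ * h ∈ P) ∧
    StronglyConnectedRel (fun g h : G => g⁻¹ * h ∈ P) ∧
    AcyclicRel (fun g h : G => g⁻¹ * h ∈ P) := by

  constructor
  · intro x; simp only []; rw [inv_mul_cancel]; exact h6f
  refine ⟨?_, ?_, ?_, ?_⟩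
  · intro x y z hxy hyz
    have : (x⁻¹ * y) * (y⁻¹ * z) ∈ P * P := Set.mul_mem_mul hxy hyz
    have h := h2 this
    simpa [mul_assoc] using h
  · intro f g h hr
    simpa [mul_assoc] using hr
  · -- strongly connected
    intro x y hinc
    obtain ⟨hne, hnxy, hnyx⟩ := hinc
    have hne' : x⁻¹ * y ∉ P⁻¹ := by
      intro h
      exact hnyx (by simpa using h)
    rcases hdir (x⁻¹ * y) with h | h | h | h
    · exact absurd h hnxy
    · exact absurd h hne'
    · -- common upper bound
      left
      refine ⟨⟨hne, hnxy, hnyx⟩, ?_⟩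
      rw [Set.mem_mul] at h
      obtain ⟨a, ha, b, hb, hab⟩ := h
      refine ⟨x * a, Or.inr ?_, Or.inr ?_⟩
      · simpa [mul_assoc] using ha
      · show y⁻¹ * (x * a) ∈ P
        have heq : y⁻¹ * (x * a) = b⁻¹ := by
          have := hab
          have h2 : y⁻¹ * x = b⁻¹ * a⁻¹ := by
            have := congrArg Inv.inv this
            simpa [mul_inv_rev] using this.symm
          rw [← mul_assoc, h2, mul_assoc, inv_mul_cancel, mul_one]
        rw [heq]
        simpa using hb
    · -- common lower bound
      right
      refine ⟨⟨hne, hnxy, hnyx⟩, ?_⟩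
      rw [Set.mem_mul] at h
      obtain ⟨a, ha, b, hb, hab⟩ := h
      have ha' : a⁻¹ ∈ P := by simpa using ha
      refine ⟨x * a, Or.inr ?_, Or.inr ?_⟩
      · show (x * a)⁻¹ * x ∈ P
        have heq : (x * a)⁻¹ * x = a⁻¹ := by group
        rw [heq]; exact ha'
      · show (x * a)⁻¹ * y ∈ P
        have heq : (x * a)⁻¹ * y = a⁻¹ * (x⁻¹ * y) := by group
        rw [heq, ← hab]
        simpa [← mul_assoc] using hb
  · -- acyclic
    intro x y z hu hl
    -- x⁻¹ y ∈ U
    obtain ⟨⟨hne1, hn1, hn2⟩, w, hxw, hyw⟩ := hu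
    obtain ⟨⟨hne2, hn3, hn4⟩, v, hvx, hvz⟩ := hl
    have hxw' : x⁻¹ * w ∈ P := by
      rcases hxw with rfl | h
      · exfalso
        rcases hyw with rfl | h
        · exact hne1 rfl
        · exact hn2 h
      · exact h
    have hyw' : y⁻¹ * w ∈ P := by
      rcases hyw with rfl | h
      · exfalso; exact hn1 hxw'
      · exact h
    have hvx' : v⁻¹ * x ∈ P := by
      rcases hvx with rfl | h
      · exfalso
        rcases hvz with rfl | h
        · exact hne2 rfl
        · exact hn3 h
      · exact h
    have hvz' : v⁻¹ * z ∈ P := by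
      rcases hvz with rfl | h
      · exfalso; exact hn4 hvx'
      · exact h
    -- x⁻¹ y is in U or L
    have hmemU : x⁻¹ * y ∈ U := by
      have hnot1 : x⁻¹ * y ≠ 1 := by
        intro h; exact hne1 (by
          have := congrArg (x * ·) h
          simpa using this.symm)
      have hnp : x⁻¹ * y ∉ P := hn1
      have hnpi : x⁻¹ * y ∉ P⁻¹ := by intro h; exact hn2 (by simpa using h)
      rcases h6cover (x⁻¹ * y) with h | h | h | h | h
      · exact absurd h hnp
      · exact absurd h hnpi
      · exact h
      · -- in L: contradiction via L * P ⊆ L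
        exfalso
        have : (x⁻¹ * y) * (y⁻¹ * w) ∈ L * P := Set.mul_mem_mul h hyw'
        have hL : x⁻¹ * w ∈ L := by
          have := h3 this
          simpa [mul_assoc] using this
        exact Set.eq_empty_iff_forall_notMem.mp h6b (x⁻¹ * w) ⟨hxw', hL⟩
      · exact absurd h hnot1
    have hmemL : x⁻¹ * z ∈ L := by
      have hnot1 : x⁻¹ * z ≠ 1 := by
        intro h; exact hne2 (by
          have := congrArg (x * ·) h
          simpa using this.symm)
      rcases h6cover (x⁻¹ * z) with h | h | h | h | h
      · exact absurd h hn3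
      · exact absurd (show z⁻¹ * x ∈ P by simpa using h) hn4
      · exfalso
        have : (v⁻¹ * x) * (x⁻¹ * z) ∈ P * U := Set.mul_mem_mul hvx' h
        have hU : v⁻¹ * z ∈ U := by
          have := h4 this
          simpa [mul_assoc] using this
        exact Set.eq_empty_iff_forall_notMem.mp h6a (v⁻¹ * z) ⟨hvz', hU⟩
      · exact h
      · exact absurd h hnot1
    have hyx : y⁻¹ * x ∈ U := by
      rw [← h1U]
      simpa using hmemU
    have : (y⁻¹ * x) * (x⁻¹ * z) ∈ U * L := Set.mul_mem_mul hyx hmemL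
    have := h5 this
    simpa [mul_assoc] using this

end PaperSC
end

section
/- Let G be a group with more than one element in which every element has finite order (a nontrivial torsion group). Then every left-invariant simply connected extension of a left-invariant partial order on G is trivial; equivalently, G admits no left-invariant partial order with a nontrivial left-invariant simply connected extension. -/
open Pointwise

namespace PaperSC

variable {S : Type*}

/-- A nontrivial torsion group admits no left-invariant partial order with a
nontrivial left-invariant simply connected extension: every such extension is trivial
(there is an incomparable pair, and all incomparable pairs are of a single type). -/
theorem stmt16 {G : Type*} [Group G] [Nontrivial G]
    (htor : ∀ g : G, IsOfFinOrder g) :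
    ∀ lt u l : G → G → Prop,
      (∀ x : G, ¬ lt x x) → (∀ x y z : G, lt x y → lt y z → lt x z) →
      LeftInvariant lt → LeftInvariant u → LeftInvariant l →
      IsSCExt lt u l →
      ((∃ x y : G, Incomp lt x y) ∧
        ((∀ x y : G, Incomp lt x y → u x y) ∨ (∀ x y : G, Incomp lt x y → l x y))) := by
  intro lt u l hirr htrans hlt hu hl hsc
  -- lt is empty
  have hempty : ∀ a b : G, ¬ lt a b := by
    intro a b hab
    have h1 : lt 1 (a⁻¹ * b) := by
      have := hlt a⁻¹ a b hab
      simpa using this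
    have hpow : ∀ n : ℕ, lt 1 ((a⁻¹ * b) ^ (n + 1)) := by
      intro n
      induction n with
      | zero => simpa using h1
      | succ k ih =>
        have step : lt ((a⁻¹ * b) ^ (k + 1)) ((a⁻¹ * b) ^ (k + 2)) := by
          have := hlt ((a⁻¹ * b) ^ (k + 1)) 1 (a⁻¹ * b) h1
          simpa [pow_succ, mul_one] using this
        exact htrans _ _ _ ih step
    obtain ⟨n, hn, hgn⟩ := isOfFinOrder_iff_pow_eq_one.mp (htor (a⁻¹ * b))
    have := hpow (n - 1)
    rw [Nat.sub_add_cancel hn, hgn] at this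
    exact hirr 1 this
  constructor
  · obtain ⟨x, y, hxy⟩ := exists_pair_ne G
    exact ⟨x, y, hxy, hempty x y, hempty y x⟩
  · by_cases hall : ∀ x y : G, Incomp lt x y → u x y
    · exact Or.inl hall
    · push_neg at hall
      obtain ⟨x, y, hinc, hnu⟩ := hall
      have hlxy : l x y := by
        rcases (hsc.exactly_one x y hinc.1).1 with h | h | h | h
        · exact absurd h (hempty x y)
        · exact absurd h (hempty y x)
        · exact absurd h hnu
        · exact h
      refine Or.inr ?_
      intro p q hpq
      by_contra hnl
      have hupq : u p q := by
        rcases (hsc.exactly_one p q hpq.1).1 with h | h | h | h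
        · exact absurd h (hempty p q)
        · exact absurd h (hempty q p)
        · exact h
        · exact absurd h hnl
      have hux : u x (x * p⁻¹ * q) := by
        have := hu (x * p⁻¹) p q hupq
        simpa [mul_assoc] using this
      exact hempty _ _ (hsc.acyclic x (x * p⁻¹ * q) y hux hlxy)


end PaperSC
end

section
/- Let G be a group with a left-invariant partial order < and a left-invariant rectifiable simply connected extension (∼_u, ∼_l), and let a, b ∈ G be distinct. Then, computing between-sets B in G⁺ with the induced order <⁺ and relations (∼_u⁺, ∼_l⁺): a < b if and only if {a_+, b_−} ⊆ B_{a_−,b_+}; a ∼_u b if and only if {a_+, b_+} ⊆ B_{a_−,b_−}; and a ∼_l b if and only if {a_−, b_−} ⊆ B_{a_+,b_+}. -/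
open Pointwise

namespace PaperSC

variable {S : Type*}

/-- The order on `G⁺ = G × {-1, 0, 1}`: `(g,i) <⁺ (h,j)` iff `g < h`, or `g = h` and `i < j`. -/
def PLt {G : Type*} (lt : G → G → Prop) (x y : G × SignType) : Prop :=
  lt x.1 y.1 ∨ (x.1 = y.1 ∧ x.2 < y.2)

/-- `(g,i) ∼ᵤ⁺ (h,j)` iff `g ∼ᵤ h`. -/
def PU {G : Type*} (u : G → G → Prop) (x y : G × SignType) : Prop := u x.1 y.1

/-- `(g,i) ∼ₗ⁺ (h,j)` iff `g ∼ₗ h`. -/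
def PL {G : Type*} (l : G → G → Prop) (x y : G × SignType) : Prop := l x.1 y.1

/-- Characterization of the order relations in `G` by between sets in `G⁺`,
where `g₋ = (g,-1)` and `g₊ = (g,1)`. -/
theorem stmt18 {G : Type*} [Group G] (lt u l : G → G → Prop)
    (hirr : ∀ x : G, ¬ lt x x)
    (htrans : ∀ x y z : G, lt x y → lt y z → lt x z)
    (hltinv : LeftInvariant lt) (huinv : LeftInvariant u) (hlinv : LeftInvariant l)
    (hsce : IsSCExt lt u l)
    (hrect : Rectifiable lt u l)
    (a b : G) (hab : a ≠ b) :
    (lt a b ↔ ({(a, 1), (b, -1)} : Set (G × SignType)) ⊆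
      BSet (PLt lt) (PU u) (PL l) ((a, -1) : G × SignType) ((b, 1) : G × SignType)) ∧
    (u a b ↔ ({(a, 1), (b, 1)} : Set (G × SignType)) ⊆
      BSet (PLt lt) (PU u) (PL l) ((a, -1) : G × SignType) ((b, -1) : G × SignType)) ∧
    (l a b ↔ ({(a, -1), (b, -1)} : Set (G × SignType)) ⊆
      BSet (PLt lt) (PU u) (PL l) ((a, 1) : G × SignType) ((b, 1) : G × SignType)) := by

  obtain ⟨usym, lsym, eo, _, _, hacy⟩ := hsce
  have hba : b ≠ a := hab.symm
  obtain ⟨_, e1, e2, e3⟩ := eo a b hab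
  have nAA : ¬ (lt a b ∧ lt b a) := fun ⟨h1, h2⟩ => hirr a (htrans a b a h1 h2)
  have s1 : ((-1:SignType) < 1) := by decide
  have s2 : ¬ ((1:SignType) < -1) := by decide
  have s3 : ¬ ((1:SignType) < 1) := by decide
  have s4 : ¬ ((-1:SignType) < -1) := by decide
  have s5 : ((1:SignType) = -1) = False := by decide
  have s6 : ((-1:SignType) = 1) = False := by decide
  have niaa : ¬ lt a a := hirr a
  have nibb : ¬ lt b b := hirr b
  refine ⟨⟨?_, ?_⟩, ⟨?_, ?_⟩, ⟨?_, ?_⟩⟩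
  · -- lt a b → memberships
    intro h x hx
    refine Set.mem_union_right _ ⟨by simp [Prod.ext_iff, hab], ?_⟩
    rcases hx with rfl | hx
    · exact Or.inl ⟨Or.inl h, Or.inl ⟨Or.inr ⟨rfl, s1⟩, Or.inl h⟩⟩
    · rw [Set.mem_singleton_iff] at hx; subst hx
      exact Or.inl ⟨Or.inl h, Or.inl ⟨Or.inl h, Or.inr ⟨rfl, s1⟩⟩⟩
  · -- memberships → lt a b
    intro h
    have h1 := h (Set.mem_insert _ _)
    have h2 := h (Set.mem_insert_of_mem _ rfl)
    simp only [BSet, Btwn, PLt, PU, PL, Set.mem_union, Set.mem_insert_iff,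
      Set.mem_singleton_iff, Set.mem_setOf_eq, Prod.mk.injEq, hab, hba,
      s1, s2, s3, s4, s5, s6, false_and, and_false, and_true, true_and, false_or,
      or_false, or_true, true_or, not_false_eq_true, ne_eq] at h1 h2
    have lsab := lsym a b; have lsba := lsym b a
    have usab := usym a b; have usba := usym b a
    obtain ⟨_, e1', e2', e3'⟩ := eo b a hba
    rcases h2 with ⟨h, _⟩ | ⟨hba', hin⟩ | ⟨hl, _⟩ | ⟨hu, hin⟩
    · exact h
    · rcases hin with ⟨hbb, _⟩ | ⟨_, hlba⟩
      · exact absurd hbb nibb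
      · exact absurd hlba (e1' hba').2.2
    · rcases h1 with ⟨h, _⟩ | ⟨hba', _⟩ | ⟨_, hin⟩ | ⟨hu, _⟩
      · exact h
      · exact absurd hl (e2 hba').2
      · rcases hin with ⟨_, h⟩ | ⟨_, haa⟩
        · exact h
        · exact absurd haa niaa
      · exact absurd hl (e3 hu)
    · rcases hin with ⟨_, hbb⟩ | ⟨_, h⟩
      · exact absurd hbb nibb
      · exact h
  · -- u a b → memberships
    intro h x hx
    refine Set.mem_union_right _ ⟨by simp [Prod.ext_iff, hab], ?_⟩
    rcases hx with rfl | hx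
    · exact Or.inr (Or.inr (Or.inr ⟨h, Or.inr ⟨usym a b h, Or.inr ⟨rfl, s1⟩⟩⟩))
    · rw [Set.mem_singleton_iff] at hx; subst hx
      exact Or.inr (Or.inr (Or.inr ⟨h, Or.inl ⟨h, Or.inr ⟨rfl, s1⟩⟩⟩))
  · intro h
    have h1 := h (Set.mem_insert _ _)
    have h2 := h (Set.mem_insert_of_mem _ rfl)
    simp only [BSet, Btwn, PLt, PU, PL, Set.mem_union, Set.mem_insert_iff,
      Set.mem_singleton_iff, Set.mem_setOf_eq, Prod.mk.injEq, hab, hba,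
      s1, s2, s3, s4, s5, s6, false_and, and_false, and_true, true_and, false_or,
      or_false, or_true, true_or, not_false_eq_true, ne_eq] at h1 h2
    have lsab := lsym a b; have lsba := lsym b a
    have usab := usym a b; have usba := usym b a
    obtain ⟨_, e1', e2', e3'⟩ := eo b a hba
    rcases h2 with ⟨hlt, hin⟩ | ⟨hba', hin⟩ | ⟨hl, hin⟩ | ⟨hu, _⟩
    · rcases hin with ⟨_, hbb⟩ | ⟨hu, _⟩
      · exact absurd hbb nibb
      · exact hu
    · rcases h1 with ⟨hlt, _⟩ | ⟨_, hin'⟩ | ⟨hl, _⟩ | ⟨hu, _⟩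
      · exact absurd ⟨hlt, hba'⟩ nAA
      · rcases hin' with ⟨_, haa⟩ | ⟨hu', _⟩
        · exact absurd haa niaa
        · exact absurd hu' (e1' hba').2.1
      · exact absurd hl (e2 hba').2
      · exact hu
    · rcases hin with ⟨_, hbb⟩ | ⟨_, hba'⟩
      · exact absurd hbb nibb
      · exact absurd hl (e2 hba').2
    · exact hu
  · -- l a b → memberships
    intro h x hx
    refine Set.mem_union_right _ ⟨by simp [Prod.ext_iff, hab], ?_⟩
    rcases hx with rfl | hx
    · exact Or.inr (Or.inr (Or.inl ⟨h, Or.inr ⟨lsym a b h, Or.inr ⟨rfl, s1⟩⟩⟩))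
    · rw [Set.mem_singleton_iff] at hx; subst hx
      exact Or.inr (Or.inr (Or.inl ⟨h, Or.inl ⟨h, Or.inr ⟨rfl, s1⟩⟩⟩))
  · intro h
    have h1 := h (Set.mem_insert _ _)
    have h2 := h (Set.mem_insert_of_mem _ rfl)
    simp only [BSet, Btwn, PLt, PU, PL, Set.mem_union, Set.mem_insert_iff,
      Set.mem_singleton_iff, Set.mem_setOf_eq, Prod.mk.injEq, hab, hba,
      s1, s2, s3, s4, s5, s6, false_and, and_false, and_true, true_and, false_or,
      or_false, or_true, true_or, not_false_eq_true, ne_eq] at h1 h2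
    have lsab := lsym a b; have lsba := lsym b a
    have usab := usym a b; have usba := usym b a
    obtain ⟨_, e1', e2', e3'⟩ := eo b a hba
    rcases h1 with ⟨hlt, hin⟩ | ⟨hba', hin⟩ | ⟨hl, _⟩ | ⟨hu, hin⟩
    · rcases hin with ⟨haa, _⟩ | ⟨_, hl⟩
      · exact absurd haa niaa
      · exact hl
    · rcases hin with _ | ⟨hu', _⟩
      · rcases h2 with ⟨hlt, _⟩ | ⟨_, hin'⟩ | ⟨hl, _⟩ | ⟨hu, _⟩
        · exact absurd ⟨hlt, hba'⟩ nAA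
        · rcases hin' with ⟨hbb, _⟩ | ⟨_, hlba⟩
          · exact absurd hbb nibb
          · exact absurd hlba (e1' hba').2.2
        · exact hl
        · exact absurd hu (e2 hba').1
      · exact absurd hu' (e1' hba').2.1
    · exact hl
    · rcases hin with ⟨_, hba'⟩ | ⟨_, haa⟩
      · exact absurd hu (e2 hba').1
      · exact absurd haa niaa


end PaperSC
end
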